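/- arXiv:1005.1303 — 4 statements merged into one kernel-verified Lean document; each statement's English description precedes it below -/
import Mathlib

section
/- Let p, q ≥ 1, m_1,…,m_q ≥ 1, n_1,…,n_p ≥ 1 be integers with N := m_1+…+m_q = n_1+…+n_p, set M_0 = 0, M_r = m_1+…+m_r, N_0 = 0, N_l = n_1+…+n_l. Let E ⊆ ℝ be measurable, V : ℝ → ℝ and ψ_1,…,ψ_q, φ_1,…,φ_p : ℝ → ℝ measurable with ∫_E |x|^k |ψ_r(x) φ_l(x)| e^{−V(x)} dx < ∞ for all 1 ≤ r ≤ q, 1 ≤ l ≤ p and 0 ≤ k ≤ 2N−2. Define ψ̃_{M_{r−1}+1+i}(x) := x^i ψ_r(x) for 0 ≤ i ≤ m_r−1 and φ̃_{N_{l−1}+1+j}(x) := x^j φ_l(x) for 0 ≤ j ≤ n_l−1. Then N!·∫_{E^N} (∏_{i=1}^N e^{−V(x_i)}) det[ψ̃_i(x_j)]_{1≤i,j≤N} det[φ̃_i(x_j)]_{1≤i,j≤N} dx = (N!/(m_1!⋯m_q!))·(N!/(n_1!⋯n_p!)) · ∫_{E^N} (∏_{i=1}^N e^{−V(x_i)})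 · (∏_{r=1}^q Δ_{m_r}(x_{M_{r−1}+1},…,x_{M_r}) ∏_{i=M_{r−1}+1}^{M_r} ψ_r(x_i)) · ( Σ_{σ ∈ S_N} sgn(σ) ∏_{l=1}^p Δ_{n_l}(x_{σ(N_{l−1}+1)},…,x_{σ(N_l)}) ∏_{i=N_{l−1}+1}^{N_l} φ_l(x_{σ(i)}) ) dx. -/
open MeasureTheory Finset

/-- Partial sum `M_k = Σ_{j<k} m_j` of the block sizes. -/
def Msum {q : ℕ} (m : Fin q → ℕ) (k : ℕ) : ℕ :=
  ∑ j ∈ Finset.univ.filter (fun j : Fin q => (j : ℕ) < k), m j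

theorem Msum_add_lt {q : ℕ} (m : Fin q → ℕ) (r : Fin q) (i : Fin (m r)) :
    Msum m (r : ℕ) + (i : ℕ) < ∑ j, m j := by
  have h2 : m r ≤ ∑ j ∈ Finset.univ.filter (fun j : Fin q => ¬ (j : ℕ) < (r : ℕ)), m j :=
    Finset.single_le_sum (fun j _ => Nat.zero_le (m j)) (by simp)
  have h3 : Msum m (r : ℕ) +
      ∑ j ∈ Finset.univ.filter (fun j : Fin q => ¬ (j : ℕ) < (r : ℕ)), m j = ∑ j, m j :=
    Finset.sum_filter_add_sum_filter_not _ _ _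
  have h4 := i.isLt
  omega

/-- The index `M_{r−1} + i` of the `i`-th element of the `r`-th block (`0`-based). -/
def blkIdx {q : ℕ} (m : Fin q → ℕ) (r : Fin q) (i : Fin (m r)) : Fin (∑ j, m j) :=
  ⟨Msum m (r : ℕ) + (i : ℕ), Msum_add_lt m r i⟩

theorem Msum_block_le {q : ℕ} (m : Fin q → ℕ) {u u' : Fin q} (h : u < u') :
    Msum m (u : ℕ) + m u ≤ Msum m (u' : ℕ) := by
  have hsub : insert u (Finset.univ.filter (fun j : Fin q => (j : ℕ) < (u : ℕ)))
      ⊆ Finset.univ.filter (fun j : Fin q => (j : ℕ) < (u' : ℕ)) := by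
    intro j hj
    simp only [Finset.mem_insert, Finset.mem_filter, Finset.mem_univ, true_and] at hj ⊢
    have huu' : (u : ℕ) < (u' : ℕ) := h
    rcases hj with rfl | hj
    · exact huu'
    · omega
  have hle := Finset.sum_le_sum_of_subset (f := m) hsub
  rw [Finset.sum_insert (by simp)] at hle
  unfold Msum
  omega

theorem blkIdx_injective {q : ℕ} (m : Fin q → ℕ) :
    Function.Injective (fun x : Σ r : Fin q, Fin (m r) => blkIdx m x.1 x.2) := by
  rintro ⟨r, i⟩ ⟨r', i'⟩ h
  have hval : Msum m (r : ℕ) + (i : ℕ) = Msum m (r' : ℕ) + (i' : ℕ) := congrArg Fin.val h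
  rcases lt_trichotomy r r' with hlt | heq | hgt
  · exact absurd hval (by have h1 := Msum_block_le m hlt; have h2 := i.isLt; omega)
  · subst heq
    have : i = i' := Fin.ext (by omega)
    rw [this]
  · exact absurd hval (by have h1 := Msum_block_le m hgt; have h2 := i'.isLt; omega)

/-- The canonical (order-preserving) equivalence between `Σ r, Fin (m r)` and `Fin (Σ m)`,
sending `(r, i)` to `M_{r−1} + i`. -/
noncomputable def blkEquiv {q : ℕ} (m : Fin q → ℕ) : (Σ r : Fin q, Fin (m r)) ≃ Fin (∑ j, m j) :=
  Equiv.ofBijective (fun x => blkIdx m x.1 x.2)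
    ((Fintype.bijective_iff_injective_and_card _).mpr
      ⟨blkIdx_injective m, by simp [Fintype.card_sigma]⟩)

/-- The Vandermonde determinant `Δ_k(y) = ∏_{i<j} (y_j − y_i)`. -/
def vdm {k : ℕ} (y : Fin k → ℝ) : ℝ :=
  ∏ i : Fin k, ∏ j ∈ Finset.Ioi i, (y j - y i)

/-- The family `ψ̃` defined by `ψ̃_{M_{r−1}+1+i}(x) := x^i ψ_r(x)` for `0 ≤ i ≤ m_r − 1`. -/
noncomputable def psiTilde {q : ℕ} (m : Fin q → ℕ) {N : ℕ} (hm : ∑ r, m r = N)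
    (ψ : Fin q → ℝ → ℝ) (idx : Fin N) : ℝ → ℝ := fun x =>
  x ^ ((((blkEquiv m).symm ((finCongr hm).symm idx)).2 : ℕ)) *
    ψ (((blkEquiv m).symm ((finCongr hm).symm idx)).1) x

noncomputable def blkE {q N : ℕ} (m : Fin q → ℕ) (hm : ∑ r, m r = N) :
    (Σ r : Fin q, Fin (m r)) ≃ Fin N := (blkEquiv m).trans (finCongr hm)

lemma blkE_apply {q N : ℕ} (m : Fin q → ℕ) (hm : ∑ r, m r = N) (r : Fin q) (i : Fin (m r)) :
    blkE m hm ⟨r, i⟩ = finCongr hm (blkIdx m r i) := rfl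

lemma psiTilde_blkE {q N : ℕ} (m : Fin q → ℕ) (hm : ∑ r, m r = N) (ψ : Fin q → ℝ → ℝ)
    (r : Fin q) (i : Fin (m r)) (t : ℝ) :
    psiTilde m hm ψ (blkE m hm ⟨r, i⟩) t = t ^ (i : ℕ) * ψ r t := by
  have h : ((blkEquiv m).symm ((finCongr hm).symm (blkE m hm ⟨r, i⟩))) = ⟨r, i⟩ := by
    simp only [blkE, Equiv.trans_apply, Equiv.symm_apply_apply]
  unfold psiTilde
  rw [h]

noncomputable def Pperm {q N : ℕ} (m : Fin q → ℕ) (hm : ∑ r, m r = N)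
    (τ : ∀ r, Equiv.Perm (Fin (m r))) : Equiv.Perm (Fin N) :=
  ((blkE m hm).symm.trans (Equiv.Perm.sigmaCongrRight τ)).trans (blkE m hm)

lemma Pperm_blkE {q N : ℕ} (m : Fin q → ℕ) (hm : ∑ r, m r = N)
    (τ : ∀ r, Equiv.Perm (Fin (m r))) (r : Fin q) (i : Fin (m r)) :
    Pperm m hm τ (blkE m hm ⟨r, i⟩) = blkE m hm ⟨r, τ r i⟩ := by
  simp [Pperm, Equiv.Perm.sigmaCongrRight, Equiv.trans_apply, Equiv.symm_apply_apply]

def fiberEquiv {q : ℕ} {m : Fin q → ℕ} (r : Fin q) :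
    Fin (m r) ≃ {s : Σ u : Fin q, Fin (m u) // s.1 = r} where
  toFun i := ⟨⟨r, i⟩, rfl⟩
  invFun s := s.2 ▸ s.1.2
  left_inv i := rfl
  right_inv := by rintro ⟨⟨u, i⟩, rfl⟩; rfl

lemma sigmaCongrRight_mulSingle {q : ℕ} {m : Fin q → ℕ} (r : Fin q)
    (p : Equiv.Perm (Fin (m r))) :
    Equiv.Perm.sigmaCongrRight (Pi.mulSingle r p) = p.extendDomain (fiberEquiv r) := by
  apply Equiv.ext
  rintro ⟨u, i⟩
  rcases eq_or_ne u r with rfl | h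
  · rw [Equiv.Perm.extendDomain_apply_subtype _ (fiberEquiv u) rfl]
    simp [fiberEquiv]
  · rw [Equiv.Perm.extendDomain_apply_not_subtype _ (fiberEquiv r) h]
    simp [Pi.mulSingle_eq_of_ne h]

lemma sign_sigmaCongrRight {q : ℕ} {m : Fin q → ℕ} (τ : ∀ r, Equiv.Perm (Fin (m r))) :
    Equiv.Perm.sign (Equiv.Perm.sigmaCongrRight τ) = ∏ r, Equiv.Perm.sign (τ r) := by
  classical
  have key : ∀ s : Finset (Fin q), ∀ τ : ∀ r, Equiv.Perm (Fin (m r)),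
      Equiv.Perm.sign (Equiv.Perm.sigmaCongrRight (fun r => if r ∈ s then τ r else 1)) =
        ∏ r ∈ s, Equiv.Perm.sign (τ r) := by
    intro s
    induction s using Finset.induction with
    | empty =>
      intro τ
      have : (fun r => if r ∈ (∅ : Finset (Fin q)) then τ r else 1)
          = (1 : ∀ r, Equiv.Perm (Fin (m r))) := by funext u; simp
      rw [this]
      simp [Equiv.Perm.sigmaCongrRight_one]
    | @insert a s ha ih =>
      intro τ
      have hsplit : (fun r => if r ∈ insert a s then τ r else 1)
          = Pi.mulSingle a (τ a) * (fun r => if r ∈ s then τ r else 1) := by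
        funext u
        rcases eq_or_ne u a with rfl | hu
        · simp [ha]
        · simp [hu, Pi.mulSingle_eq_of_ne hu]
      rw [hsplit, ← Equiv.Perm.sigmaCongrRight_mul, map_mul,
        sigmaCongrRight_mulSingle, Equiv.Perm.sign_extendDomain, ih τ,
        Finset.prod_insert ha]
  have := key Finset.univ τ
  simpa using this

lemma sign_Pperm {q N : ℕ} (m : Fin q → ℕ) (hm : ∑ r, m r = N)
    (τ : ∀ r, Equiv.Perm (Fin (m r))) :
    Equiv.Perm.sign (Pperm m hm τ) = ∏ r, Equiv.Perm.sign (τ r) := by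
  rw [Pperm, Equiv.Perm.sign_symm_trans_trans, sign_sigmaCongrRight]

lemma vdm_expand {k : ℕ} (y : Fin k → ℝ) :
    vdm y = ∑ τ : Equiv.Perm (Fin k), ((Equiv.Perm.sign τ : ℤ) : ℝ) * ∏ i, y (τ i) ^ (i : ℕ) := by
  rw [vdm, ← Matrix.det_vandermonde, Matrix.det_apply]
  refine Finset.sum_congr rfl fun τ _ => ?_
  simp [Matrix.vandermonde, Units.smul_def, zsmul_eq_mul]

lemma G_expand {q N : ℕ} (m : Fin q → ℕ) (hm : ∑ r, m r = N) (ψ : Fin q → ℝ → ℝ)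
    (y : Fin N → ℝ) :
    ∏ r, (vdm (fun i => y (blkE m hm ⟨r, i⟩)) * ∏ i, ψ r (y (blkE m hm ⟨r, i⟩))) =
      ∑ τ : ∀ r, Equiv.Perm (Fin (m r)),
        ((Equiv.Perm.sign (Pperm m hm τ) : ℤ) : ℝ) *
          ∏ j, psiTilde m hm ψ j (y (Pperm m hm τ j)) := by
  have step1 : ∀ r : Fin q,
      vdm (fun i => y (blkE m hm ⟨r, i⟩)) * ∏ i, ψ r (y (blkE m hm ⟨r, i⟩)) =
      ∑ τr : Equiv.Perm (Fin (m r)), ((Equiv.Perm.sign τr : ℤ) : ℝ) *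
        ∏ i, (y (blkE m hm ⟨r, τr i⟩) ^ (i : ℕ) * ψ r (y (blkE m hm ⟨r, τr i⟩))) := by
    intro r
    rw [vdm_expand, Finset.sum_mul]
    refine Finset.sum_congr rfl fun τr _ => ?_
    rw [mul_assoc]
    congr 1
    rw [← Equiv.prod_comp τr fun i => ψ r (y (blkE m hm ⟨r, i⟩)), ← Finset.prod_mul_distrib]
  calc ∏ r, (vdm (fun i => y (blkE m hm ⟨r, i⟩)) * ∏ i, ψ r (y (blkE m hm ⟨r, i⟩)))
      = ∑ τ ∈ Fintype.piFinset (fun _ => Finset.univ),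
          ∏ r, (((Equiv.Perm.sign (τ r) : ℤ) : ℝ) *
            ∏ i, (y (blkE m hm ⟨r, τ r i⟩) ^ (i : ℕ) * ψ r (y (blkE m hm ⟨r, τ r i⟩)))) := by
        rw [Finset.prod_congr rfl fun r _ => step1 r]
        exact Finset.prod_univ_sum (fun _ => Finset.univ) fun r τr =>
          ((Equiv.Perm.sign τr : ℤ) : ℝ) *
            ∏ i, (y (blkE m hm ⟨r, τr i⟩) ^ (i : ℕ) * ψ r (y (blkE m hm ⟨r, τr i⟩)))
    _ = ∑ τ : ∀ r, Equiv.Perm (Fin (m r)),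
        ((Equiv.Perm.sign (Pperm m hm τ) : ℤ) : ℝ) *
          ∏ j, psiTilde m hm ψ j (y (Pperm m hm τ j)) := by
        rw [Fintype.piFinset_univ]
        refine Finset.sum_congr rfl fun τ _ => ?_
        rw [Finset.prod_mul_distrib]
        congr 1
        · rw [sign_Pperm]
          push_cast
          rfl
        · calc ∏ r, ∏ i, (y (blkE m hm ⟨r, τ r i⟩) ^ (i : ℕ) * ψ r (y (blkE m hm ⟨r, τ r i⟩)))
              = ∏ r, ∏ i, psiTilde m hm ψ (blkE m hm ⟨r, i⟩) (y (Pperm m hm τ (blkE m hm ⟨r, i⟩))) := by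
                refine Finset.prod_congr rfl fun r _ => Finset.prod_congr rfl fun i _ => ?_
                rw [psiTilde_blkE, Pperm_blkE]
            _ = ∏ s : Σ r : Fin q, Fin (m r),
                  psiTilde m hm ψ (blkE m hm s) (y (Pperm m hm τ (blkE m hm s))) := by
                rw [← Finset.univ_sigma_univ, Finset.prod_sigma]
            _ = ∏ j, psiTilde m hm ψ j (y (Pperm m hm τ j)) :=
                Equiv.prod_comp (blkE m hm) fun j => psiTilde m hm ψ j (y (Pperm m hm τ j))

lemma det_expand {q N : ℕ} (m : Fin q → ℕ) (hm : ∑ r, m r = N) (ψ : Fin q → ℝ → ℝ)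
    (x : Fin N → ℝ) :
    Matrix.det (Matrix.of fun i j => psiTilde m hm ψ i (x j)) =
      ∑ ρ : Equiv.Perm (Fin N), ((Equiv.Perm.sign ρ : ℤ) : ℝ) *
        ∏ j, psiTilde m hm ψ j (x (ρ j)) := by
  rw [← Matrix.det_transpose, Matrix.det_apply]
  refine Finset.sum_congr rfl fun ρ _ => ?_
  simp [Units.smul_def, zsmul_eq_mul]

lemma claim1 {q N : ℕ} (m : Fin q → ℕ) (hm : ∑ r, m r = N) (ψ : Fin q → ℝ → ℝ)
    (x : Fin N → ℝ) :
    ∑ σ : Equiv.Perm (Fin N), ((Equiv.Perm.sign σ : ℤ) : ℝ) *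
        ∏ r, (vdm (fun i => x (σ (finCongr hm (blkIdx m r i)))) *
          ∏ i, ψ r (x (σ (finCongr hm (blkIdx m r i))))) =
      (∏ r, ((m r).factorial : ℝ)) *
        Matrix.det (Matrix.of fun i j => psiTilde m hm ψ i (x j)) := by
  have h1 : ∀ σ : Equiv.Perm (Fin N),
      ((Equiv.Perm.sign σ : ℤ) : ℝ) *
        ∏ r, (vdm (fun i => x (σ (finCongr hm (blkIdx m r i)))) *
          ∏ i, ψ r (x (σ (finCongr hm (blkIdx m r i))))) =
      ∑ τ : ∀ r, Equiv.Perm (Fin (m r)),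
        ((Equiv.Perm.sign (σ * Pperm m hm τ) : ℤ) : ℝ) *
          ∏ j, psiTilde m hm ψ j (x ((σ * Pperm m hm τ) j)) := by
    intro σ
    have h2 := G_expand m hm ψ (fun j => x (σ j))
    simp only [blkE_apply] at h2
    rw [h2, Finset.mul_sum]
    refine Finset.sum_congr rfl fun τ _ => ?_
    rw [← mul_assoc, map_mul]
    push_cast
    rfl
  rw [Finset.sum_congr rfl fun σ _ => h1 σ, Finset.sum_comm]
  have h3 : ∀ τ : ∀ r, Equiv.Perm (Fin (m r)),
      ∑ σ : Equiv.Perm (Fin N), ((Equiv.Perm.sign (σ * Pperm m hm τ) : ℤ) : ℝ) *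
          ∏ j, psiTilde m hm ψ j (x ((σ * Pperm m hm τ) j)) =
      Matrix.det (Matrix.of fun i j => psiTilde m hm ψ i (x j)) := by
    intro τ
    rw [det_expand m hm ψ x]
    exact Equiv.sum_comp (Equiv.mulRight (Pperm m hm τ))
      (fun ρ => ((Equiv.Perm.sign ρ : ℤ) : ℝ) * ∏ j, psiTilde m hm ψ j (x (ρ j)))
  rw [Finset.sum_congr rfl fun τ _ => h3 τ, Finset.sum_const]
  simp [nsmul_eq_mul, Fintype.card_pi, Fintype.card_perm]

lemma pi_restrict (N : ℕ) (E : Set ℝ) (hE : MeasurableSet E) :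
    (volume : Measure (Fin N → ℝ)).restrict (Set.univ.pi fun _ => E)
      = Measure.pi (fun _ : Fin N => volume.restrict E) := by
  refine (Measure.pi_eq (μ := fun _ : Fin N => volume.restrict E) fun s hs => ?_).symm
  rw [Measure.restrict_apply (MeasurableSet.univ_pi hs), ← Set.pi_inter_distrib,
    volume_pi, Measure.pi_pi]
  simp [Measure.restrict_apply (hs _)]

lemma integrable_pi_prod {N : ℕ} (μ : Measure ℝ) [SigmaFinite μ] (g : Fin N → ℝ → ℝ)
    (hg : ∀ i, Integrable (g i) μ) :
    Integrable (fun x : Fin N → ℝ => ∏ i, g i (x i)) (Measure.pi fun _ => μ) := by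
  letI : MeasureSpace ℝ := ⟨μ⟩
  exact Integrable.fintype_prod (f := g) hg

lemma exp_lt {q N : ℕ} (m : Fin q → ℕ) (hm : ∑ r, m r = N) (idx : Fin N) :
    (((blkEquiv m).symm ((finCongr hm).symm idx)).2 : ℕ) < N := by
  have h1 := (((blkEquiv m).symm ((finCongr hm).symm idx)).2).isLt
  have h2 : m (((blkEquiv m).symm ((finCongr hm).symm idx)).1) ≤ ∑ r, m r :=
    Finset.single_le_sum (fun r _ => Nat.zero_le _) (Finset.mem_univ _)
  omega

lemma base_integrable {p q N : ℕ} (m : Fin q → ℕ) (n : Fin p → ℕ)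
    (hm : ∑ r, m r = N) (hn : ∑ l, n l = N)
    (E : Set ℝ) (V : ℝ → ℝ) (hV : Measurable V)
    (ψ : Fin q → ℝ → ℝ) (φ : Fin p → ℝ → ℝ)
    (hψ : ∀ r, Measurable (ψ r)) (hφ : ∀ l, Measurable (φ l))
    (hint : ∀ (r : Fin q) (l : Fin p) (k : ℕ), k ≤ 2 * N - 2 →
      IntegrableOn (fun x => |x| ^ k * |ψ r x * φ l x| * Real.exp (-V x)) E)
    (a b : Fin N) :
    Integrable (fun t => psiTilde m hm ψ a t * (psiTilde n hn φ b t * Real.exp (-V t)))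
      (volume.restrict E) := by
  set r := ((blkEquiv m).symm ((finCongr hm).symm a)).1 with hr
  set e1 := ((((blkEquiv m).symm ((finCongr hm).symm a)).2 : ℕ)) with he1
  set l := ((blkEquiv n).symm ((finCongr hn).symm b)).1 with hl
  set e2 := ((((blkEquiv n).symm ((finCongr hn).symm b)).2 : ℕ)) with he2
  have hkm := exp_lt m hm a
  have hkn := exp_lt n hn b
  have hk : e1 + e2 ≤ 2 * N - 2 := by omega
  have hmeas : Measurable fun t : ℝ =>
      psiTilde m hm ψ a t * (psiTilde n hn φ b t * Real.exp (-V t)) := by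
    unfold psiTilde
    exact ((measurable_id.pow_const e1).mul (hψ r)).mul
      (((measurable_id.pow_const e2).mul (hφ l)).mul ((hV.neg).exp))
  refine (hint r l (e1 + e2) hk).mono' hmeas.aestronglyMeasurable ?_
  filter_upwards with t
  have : ‖psiTilde m hm ψ a t * (psiTilde n hn φ b t * Real.exp (-V t))‖
      = |t| ^ (e1 + e2) * |ψ r t * φ l t| * Real.exp (-V t) := by
    unfold psiTilde
    rw [he1, he2, hr, hl]
    simp only [Real.norm_eq_abs, abs_mul, abs_pow, Real.abs_exp, pow_add]
    ring
  rw [this]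

lemma integral_comp_perm {N : ℕ} (μ : Measure ℝ) [SigmaFinite μ] (σ : Equiv.Perm (Fin N))
    (f : (Fin N → ℝ) → ℝ) :
    ∫ x, f (x ∘ σ) ∂(Measure.pi fun _ : Fin N => μ)
      = ∫ x, f x ∂(Measure.pi fun _ : Fin N => μ) := by
  have h : MeasurePreserving (MeasurableEquiv.piCongrLeft (fun _ : Fin N => ℝ) σ.symm)
      (Measure.pi fun _ => μ) (Measure.pi fun _ => μ) :=
    measurePreserving_piCongrLeft (fun _ : Fin N => μ) σ.symm
  have he : ∀ x : Fin N → ℝ,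
      (MeasurableEquiv.piCongrLeft (fun _ : Fin N => ℝ) σ.symm) x = x ∘ σ := by
    intro x
    funext j
    have h2 := Equiv.piCongrLeft_apply_apply (fun _ : Fin N => ℝ) σ.symm x (σ j)
    rw [Equiv.symm_apply_apply] at h2
    simpa [MeasurableEquiv.coe_piCongrLeft] using h2
  rw [← h.integral_comp (MeasurableEquiv.measurableEmbedding _) f]
  refine integral_congr_ae (Filter.Eventually.of_forall fun x => ?_)
  exact congrArg f (he x).symm

lemma prod_reindex_perm {N : ℕ} (x : Fin N → ℝ) (ρ : Equiv.Perm (Fin N))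
    (g : Fin N → ℝ → ℝ) : ∏ j, g j (x (ρ j)) = ∏ j, g (ρ⁻¹ j) (x j) := by
  rw [← Equiv.prod_comp ρ (fun j => g (ρ⁻¹ j) (x j))]
  refine Finset.prod_congr rfl fun j _ => ?_
  simp

lemma integrable_I {p q N : ℕ} (m : Fin q → ℕ) (n : Fin p → ℕ)
    (hm : ∑ r, m r = N) (hn : ∑ l, n l = N)
    (E : Set ℝ) (hE : MeasurableSet E) (V : ℝ → ℝ) (hV : Measurable V)
    (ψ : Fin q → ℝ → ℝ) (φ : Fin p → ℝ → ℝ)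
    (hψ : ∀ r, Measurable (ψ r)) (hφ : ∀ l, Measurable (φ l))
    (hint : ∀ (r : Fin q) (l : Fin p) (k : ℕ), k ≤ 2 * N - 2 →
      IntegrableOn (fun x => |x| ^ k * |ψ r x * φ l x| * Real.exp (-V x)) E)
    (σ : Equiv.Perm (Fin N)) :
    Integrable (fun x : Fin N → ℝ => (∏ i, Real.exp (-V (x i))) *
        (∏ r, (vdm (fun i => x (σ (finCongr hm (blkIdx m r i)))) *
          ∏ i, ψ r (x (σ (finCongr hm (blkIdx m r i)))))) *
        Matrix.det (Matrix.of fun i j => psiTilde n hn φ i (x j)))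
      (Measure.pi fun _ : Fin N => volume.restrict E) := by
  have hexp : ∀ x : Fin N → ℝ,
      (∏ i, Real.exp (-V (x i))) *
        (∏ r, (vdm (fun i => x (σ (finCongr hm (blkIdx m r i)))) *
          ∏ i, ψ r (x (σ (finCongr hm (blkIdx m r i)))))) *
        Matrix.det (Matrix.of fun i j => psiTilde n hn φ i (x j)) =
      ∑ τ : ∀ r, Equiv.Perm (Fin (m r)), ∑ π : Equiv.Perm (Fin N),
        (((Equiv.Perm.sign (Pperm m hm τ) : ℤ) : ℝ) * ((Equiv.Perm.sign π : ℤ) : ℝ)) *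
          ∏ j, (psiTilde m hm ψ ((σ * Pperm m hm τ)⁻¹ j) (x j) *
            (psiTilde n hn φ (π⁻¹ j) (x j) * Real.exp (-V (x j)))) := by
    intro x
    have hG := G_expand m hm ψ (fun j => x (σ j))
    simp only [blkE_apply] at hG
    rw [hG, det_expand n hn φ x, mul_assoc, Finset.sum_mul_sum, Finset.mul_sum]
    refine Finset.sum_congr rfl fun τ _ => ?_
    rw [Finset.mul_sum]
    refine Finset.sum_congr rfl fun π _ => ?_
    rw [prod_reindex_perm x π (fun a t => psiTilde n hn φ a t)]
    have hρ : ∏ j, psiTilde m hm ψ j (x (σ (Pperm m hm τ j)))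
        = ∏ j, psiTilde m hm ψ ((σ * Pperm m hm τ)⁻¹ j) (x j) := by
      rw [← prod_reindex_perm x (σ * Pperm m hm τ) (fun a t => psiTilde m hm ψ a t)]
      rfl
    rw [hρ, show (∏ j, (psiTilde m hm ψ ((σ * Pperm m hm τ)⁻¹ j) (x j) *
            (psiTilde n hn φ (π⁻¹ j) (x j) * Real.exp (-V (x j))))) =
          (∏ j, psiTilde m hm ψ ((σ * Pperm m hm τ)⁻¹ j) (x j)) *
            ((∏ j, psiTilde n hn φ (π⁻¹ j) (x j)) * (∏ j, Real.exp (-V (x j)))) from by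
        rw [Finset.prod_mul_distrib, Finset.prod_mul_distrib]]
    push_cast
    ring
  rw [show (fun x : Fin N → ℝ => (∏ i, Real.exp (-V (x i))) *
        (∏ r, (vdm (fun i => x (σ (finCongr hm (blkIdx m r i)))) *
          ∏ i, ψ r (x (σ (finCongr hm (blkIdx m r i)))))) *
        Matrix.det (Matrix.of fun i j => psiTilde n hn φ i (x j))) = fun x =>
      ∑ τ : ∀ r, Equiv.Perm (Fin (m r)), ∑ π : Equiv.Perm (Fin N),
        (((Equiv.Perm.sign (Pperm m hm τ) : ℤ) : ℝ) * ((Equiv.Perm.sign π : ℤ) : ℝ)) *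
          ∏ j, (psiTilde m hm ψ ((σ * Pperm m hm τ)⁻¹ j) (x j) *
            (psiTilde n hn φ (π⁻¹ j) (x j) * Real.exp (-V (x j)))) from funext hexp]
  refine integrable_finset_sum _ fun τ _ => integrable_finset_sum _ fun π _ => ?_
  exact (integrable_pi_prod (volume.restrict E)
    (fun j t => psiTilde m hm ψ ((σ * Pperm m hm τ)⁻¹ j) t *
      (psiTilde n hn φ (π⁻¹ j) t * Real.exp (-V t)))
    (fun j => base_integrable m n hm hn E V hV ψ φ hψ hφ hint _ _)).const_mul _

/-- Proposition 2.1, second identity: the `N`-fold integral of the product of the two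
block-structured determinants equals the multinomial-weighted `N`-fold integral of the product
of the `ψ`-block Vandermonde factors with the signed sum over permutations of the `φ`-block
Vandermonde factors. -/
theorem block_determinant_integral_identity (p q N : ℕ) (hp : 1 ≤ p) (hq : 1 ≤ q)
    (m : Fin q → ℕ) (n : Fin p → ℕ) (hm1 : ∀ r, 1 ≤ m r) (hn1 : ∀ l, 1 ≤ n l)
    (hm : ∑ r, m r = N) (hn : ∑ l, n l = N)
    (E : Set ℝ) (hE : MeasurableSet E) (V : ℝ → ℝ) (hV : Measurable V)
    (ψ : Fin q → ℝ → ℝ) (φ : Fin p → ℝ → ℝ)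
    (hψ : ∀ r, Measurable (ψ r)) (hφ : ∀ l, Measurable (φ l))
    (hint : ∀ (r : Fin q) (l : Fin p) (k : ℕ), k ≤ 2 * N - 2 →
      IntegrableOn (fun x => |x| ^ k * |ψ r x * φ l x| * Real.exp (-V x)) E) :
    (N.factorial : ℝ) *
        ∫ x : Fin N → ℝ in Set.univ.pi (fun _ => E),
          (∏ i, Real.exp (-V (x i))) *
            Matrix.det (Matrix.of fun i j => psiTilde m hm ψ i (x j)) *
            Matrix.det (Matrix.of fun i j => psiTilde n hn φ i (x j)) =
      ((N.factorial : ℝ) / ∏ r, ((m r).factorial : ℝ)) *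
        ((N.factorial : ℝ) / ∏ l, ((n l).factorial : ℝ)) *
        ∫ x : Fin N → ℝ in Set.univ.pi (fun _ => E),
          (∏ i, Real.exp (-V (x i))) *
            (∏ r : Fin q,
              (vdm (fun i : Fin (m r) => x (finCongr hm (blkIdx m r i))) *
                ∏ i : Fin (m r), ψ r (x (finCongr hm (blkIdx m r i))))) *
            (∑ σ : Equiv.Perm (Fin N), ((Equiv.Perm.sign σ : ℤ) : ℝ) *
              ∏ l : Fin p,
                (vdm (fun j : Fin (n l) => x (σ (finCongr hn (blkIdx n l j)))) *
                  ∏ j : Fin (n l), φ l (x (σ (finCongr hn (blkIdx n l j)))))) := by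
  classical
  have hPm : (∏ r, ((m r).factorial : ℝ)) ≠ 0 :=
    Finset.prod_ne_zero_iff.mpr fun r _ => Nat.cast_ne_zero.mpr (Nat.factorial_ne_zero _)
  have hPn : (∏ l, ((n l).factorial : ℝ)) ≠ 0 :=
    Finset.prod_ne_zero_iff.mpr fun l _ => Nat.cast_ne_zero.mpr (Nat.factorial_ne_zero _)
  have hrest : (volume : Measure (Fin N → ℝ)).restrict (Set.univ.pi fun _ => E)
      = Measure.pi (fun _ : Fin N => volume.restrict E) := pi_restrict N E hE
  rw [hrest]
  -- pointwise identity for the LHS integrand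
  have hdetψ : ∀ x : Fin N → ℝ,
      Matrix.det (Matrix.of fun i j => psiTilde m hm ψ i (x j)) =
      (∏ r, ((m r).factorial : ℝ))⁻¹ *
        ∑ σ : Equiv.Perm (Fin N), ((Equiv.Perm.sign σ : ℤ) : ℝ) *
          ∏ r, (vdm (fun i => x (σ (finCongr hm (blkIdx m r i)))) *
            ∏ i, ψ r (x (σ (finCongr hm (blkIdx m r i))))) := by
    intro x
    rw [claim1 m hm ψ x, inv_mul_cancel_left₀ hPm]
  have hOne : ∀ x : Fin N → ℝ,
      (∏ i, Real.exp (-V (x i))) *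
        Matrix.det (Matrix.of fun i j => psiTilde m hm ψ i (x j)) *
        Matrix.det (Matrix.of fun i j => psiTilde n hn φ i (x j)) =
      (∏ r, ((m r).factorial : ℝ))⁻¹ *
        ∑ σ : Equiv.Perm (Fin N), ((Equiv.Perm.sign σ : ℤ) : ℝ) *
          ((∏ i, Real.exp (-V (x i))) *
            (∏ r, (vdm (fun i => x (σ (finCongr hm (blkIdx m r i)))) *
              ∏ i, ψ r (x (σ (finCongr hm (blkIdx m r i)))))) *
            Matrix.det (Matrix.of fun i j => psiTilde n hn φ i (x j))) := by
    intro x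
    rw [hdetψ x, show ∀ a b c d : ℝ, a * (b * c) * d = b * (c * (a * d)) from fun a b c d => by ring,
      Finset.sum_mul]
    congr 1
    refine Finset.sum_congr rfl fun σ _ => ?_
    ring
  -- pointwise identity for the RHS integrand
  have hTwo : ∀ x : Fin N → ℝ,
      (∏ i, Real.exp (-V (x i))) *
        (∏ r, (vdm (fun i => x (finCongr hm (blkIdx m r i))) *
          ∏ i, ψ r (x (finCongr hm (blkIdx m r i))))) *
        (∑ σ : Equiv.Perm (Fin N), ((Equiv.Perm.sign σ : ℤ) : ℝ) *
          ∏ l, (vdm (fun j => x (σ (finCongr hn (blkIdx n l j)))) *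
            ∏ j, φ l (x (σ (finCongr hn (blkIdx n l j)))))) =
      (∏ l, ((n l).factorial : ℝ)) *
        ((∏ i, Real.exp (-V (x i))) *
          (∏ r, (vdm (fun i => x (finCongr hm (blkIdx m r i))) *
            ∏ i, ψ r (x (finCongr hm (blkIdx m r i))))) *
          Matrix.det (Matrix.of fun i j => psiTilde n hn φ i (x j))) := by
    intro x
    rw [claim1 n hn φ x]
    ring
  -- change of variables for each σ
  have hcov : ∀ σ : Equiv.Perm (Fin N),
      ∫ x : Fin N → ℝ, ((Equiv.Perm.sign σ : ℤ) : ℝ) *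
          ((∏ i, Real.exp (-V (x i))) *
            (∏ r, (vdm (fun i => x (σ (finCongr hm (blkIdx m r i)))) *
              ∏ i, ψ r (x (σ (finCongr hm (blkIdx m r i)))))) *
            Matrix.det (Matrix.of fun i j => psiTilde n hn φ i (x j)))
          ∂(Measure.pi (fun _ : Fin N => volume.restrict E)) =
      ∫ x : Fin N → ℝ, ((∏ i, Real.exp (-V (x i))) *
          (∏ r, (vdm (fun i => x (finCongr hm (blkIdx m r i))) *
            ∏ i, ψ r (x (finCongr hm (blkIdx m r i))))) *
          Matrix.det (Matrix.of fun i j => psiTilde n hn φ i (x j)))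
          ∂(Measure.pi (fun _ : Fin N => volume.restrict E)) := by
    intro σ
    rw [← integral_comp_perm (volume.restrict E) σ
      (fun y => (∏ i, Real.exp (-V (y i))) *
        (∏ r, (vdm (fun i => y (finCongr hm (blkIdx m r i))) *
          ∏ i, ψ r (y (finCongr hm (blkIdx m r i))))) *
        Matrix.det (Matrix.of fun i j => psiTilde n hn φ i (y j)))]
    refine integral_congr_ae (Filter.Eventually.of_forall fun x => ?_)
    simp only [Function.comp_apply]
    rw [Equiv.prod_comp σ (fun i => Real.exp (-V (x i))),
      show (Matrix.of fun i j => psiTilde n hn φ i (x (σ j)))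
        = (Matrix.of fun i j => psiTilde n hn φ i (x j)).submatrix id ⇑σ from rfl,
      Matrix.det_permute']
    push_cast
    ring
  -- put everything together
  rw [integral_congr_ae (Filter.Eventually.of_forall hOne),
    MeasureTheory.integral_const_mul _ _,
    integral_finset_sum _ (fun σ _ =>
      (integrable_I m n hm hn E hE V hV ψ φ hψ hφ hint σ).const_mul _),
    Finset.sum_congr rfl (fun σ _ => hcov σ),
    integral_congr_ae (Filter.Eventually.of_forall hTwo),
    MeasureTheory.integral_const_mul _ _, Finset.sum_const, Finset.card_univ, Fintype.card_perm,
    Fintype.card_fin, nsmul_eq_mul]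
  field_simp
end

section
/- For all integers k, l ∈ ℤ and every constant n ∈ ℝ, the operators satisfy the mixed relation 𝕁^{(2)}_{k,n} ∘ 𝕁^{(1)}_{l,n} − 𝕁^{(1)}_{l,n} ∘ 𝕁^{(2)}_{k,n} = −l·𝕁^{(1)}_{k+l,n} + (k(k+1)/2)·δ_{k,−l}·id as linear endomorphisms of R = ℝ[t_1, t_2, t_3, …]. -/
open MvPolynomial

/-- `∂/∂t_m` on `ℝ[t_1, t_2, …]`, with the convention that it is `0` for `m ≤ 0`. -/
noncomputable def Dt (m : ℤ) : MvPolynomial ℕ+ ℝ → MvPolynomial ℕ+ ℝ :=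
  if h : 0 < m then fun p => MvPolynomial.pderiv (⟨m.toNat, by omega⟩ : ℕ+) p else fun _ => 0

/-- Multiplication by `t_m` on `ℝ[t_1, t_2, …]`, with the convention `t_m = 0` for `m ≤ 0`. -/
noncomputable def Xt (m : ℤ) : MvPolynomial ℕ+ ℝ → MvPolynomial ℕ+ ℝ :=
  if h : 0 < m then
    fun p => (MvPolynomial.X (⟨m.toNat, by omega⟩ : ℕ+) : MvPolynomial ℕ+ ℝ) * p
  else fun _ => 0

abbrev P := MvPolynomial ℕ+ ℝ

lemma Dt_nonpos {m : ℤ} (h : ¬ 0 < m) (p : P) : Dt m p = 0 := by simp [Dt, h]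
lemma Xt_nonpos {m : ℤ} (h : ¬ 0 < m) (p : P) : Xt m p = 0 := by simp [Xt, h]

lemma Dt_pos {m : ℤ} (h : 0 < m) (p : P) :
    Dt m p = MvPolynomial.pderiv (σ := ℕ+) (⟨m.toNat, by omega⟩ : ℕ+) p := by simp [Dt, h]; rfl
lemma Xt_pos {m : ℤ} (h : 0 < m) (p : P) :
    Xt m p = (MvPolynomial.X (⟨m.toNat, by omega⟩ : ℕ+) : P) * p := by simp [Xt, h]

lemma Dt_add (m : ℤ) (p q : P) : Dt m (p + q) = Dt m p + Dt m q := by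
  by_cases h : 0 < m
  · simp [Dt_pos h]
  · simp [Dt_nonpos h]

lemma Dt_smul (m : ℤ) (c : ℝ) (p : P) : Dt m (c • p) = c • Dt m p := by
  by_cases h : 0 < m
  · simp [Dt_pos h]
  · simp [Dt_nonpos h]

lemma Dt_zero (m : ℤ) : Dt m 0 = 0 := by
  by_cases h : 0 < m
  · simp [Dt_pos h]
  · simp [Dt_nonpos h]

lemma Xt_add (m : ℤ) (p q : P) : Xt m (p + q) = Xt m p + Xt m q := by
  by_cases h : 0 < m
  · simp [Xt_pos h, mul_add]
  · simp [Xt_nonpos h]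

lemma Xt_smul (m : ℤ) (c : ℝ) (p : P) : Xt m (c • p) = c • Xt m p := by
  by_cases h : 0 < m
  · simp [Xt_pos h]
  · simp [Xt_nonpos h]

lemma Xt_zero (m : ℤ) : Xt m 0 = 0 := by
  by_cases h : 0 < m
  · simp [Xt_pos h]
  · simp [Xt_nonpos h]

-- coercion helpers
lemma Xt_coe (i : ℕ+) (p : P) : Xt ((i : ℕ) : ℤ) p = (MvPolynomial.X i : P) * p := by
  have h : (0:ℤ) < ((i:ℕ):ℤ) := by exact_mod_cast i.pos
  rw [Xt_pos h]
  congr 1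

lemma Dt_coe (i : ℕ+) (p : P) : Dt ((i : ℕ) : ℤ) p = MvPolynomial.pderiv i p := by
  have h : (0:ℤ) < ((i:ℕ):ℤ) := by exact_mod_cast i.pos
  rw [Dt_pos h]
  congr 1

-- commutation relations

lemma pderiv_comm' (i j : ℕ+) (p : P) :
    pderiv i (pderiv j p) = pderiv j (pderiv i p) := by
  rcases eq_or_ne i j with rfl | hij
  · rfl
  induction p using MvPolynomial.induction_on' with
  | monomial s a =>
      simp only [pderiv_monomial]
      rw [tsub_tsub, tsub_tsub, add_comm]
      congr 1
      have h1 : (s - Finsupp.single j 1 : ℕ+ →₀ ℕ) i = s i := by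
        simp [Finsupp.sub_apply, Finsupp.single_apply, hij.symm]
      have h2 : (s - Finsupp.single i 1 : ℕ+ →₀ ℕ) j = s j := by
        simp [Finsupp.sub_apply, Finsupp.single_apply, hij]
      rw [h1, h2]; ring
  | add p q hp hq => simp [hp, hq]

lemma Dt_Dt_comm (a b : ℤ) (p : P) : Dt a (Dt b p) = Dt b (Dt a p) := by
  by_cases ha : 0 < a
  · by_cases hb : 0 < b
    · simp only [Dt_pos ha, Dt_pos hb]
      exact pderiv_comm' _ _ _
    · simp [Dt_nonpos hb, Dt_zero, Dt_pos ha, map_zero]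
  · simp [Dt_nonpos ha, Dt_zero]

lemma Xt_Xt_comm (a b : ℤ) (p : P) : Xt a (Xt b p) = Xt b (Xt a p) := by
  by_cases ha : 0 < a
  · by_cases hb : 0 < b
    · simp only [Xt_pos ha, Xt_pos hb]; ring
    · simp [Xt_nonpos hb, Xt_zero, Xt_pos ha]
  · simp [Xt_nonpos ha, Xt_zero]

lemma Dt_Xt_comm (a b : ℤ) (p : P) :
    Dt a (Xt b p) = Xt b (Dt a p) + (if a = b ∧ 0 < a then p else 0) := by
  by_cases hb : 0 < b
  · by_cases ha : 0 < a
    · simp only [Dt_pos ha, Xt_pos hb, MvPolynomial.pderiv_mul]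
      by_cases hab : a = b
      · subst hab
        simp [ha, MvPolynomial.pderiv_X_self, add_comm]
        exact (congrArg (fun q => p * q) (MvPolynomial.pderiv_X_self (R := ℝ) (⟨a.toNat, by omega⟩ : ℕ+))).trans (mul_one p)
      · have : (⟨b.toNat, by omega⟩ : ℕ+) ≠ (⟨a.toNat, by omega⟩ : ℕ+) := by
          intro h; apply hab; have := congrArg (fun x : ℕ+ => (x:ℕ)) h; simp at this; omega
        simp [MvPolynomial.pderiv_X_of_ne this, hab]
        exact Or.inr (MvPolynomial.pderiv_X_of_ne (R := ℝ) this)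
    · have : ¬ (a = b ∧ 0 < a) := by tauto
      simp [Dt_nonpos ha, Xt_zero, this]
  · have : ¬ (a = b ∧ 0 < a) := by rintro ⟨rfl, h⟩; exact hb h
    simp [Xt_nonpos hb, Dt_zero, Xt_zero, this]

noncomputable def Bop (m : ℤ) (p : P) : P :=
  ∑ᶠ i : ℕ+, ((i : ℕ) : ℝ) • ((MvPolynomial.X i : P) * Dt (((i : ℕ) : ℤ) + m) p)

lemma Dt_support_finite (m : ℤ) (p : P) :
    {i : ℕ+ | Dt (((i : ℕ) : ℤ) + m) p ≠ 0}.Finite := by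
  classical
  set g : ℕ+ → ℕ+ := fun v => if h : 0 < (v : ℤ) - m then ⟨((v:ℤ) - m).toNat, by omega⟩ else 1
  apply Set.Finite.subset (Set.Finite.image g p.vars.finite_toSet)
  intro i hi
  simp only [Set.mem_setOf_eq] at hi
  have hpos : 0 < ((i : ℕ) : ℤ) + m := by
    by_contra h
    exact hi (Dt_nonpos h p)
  set v : ℕ+ := ⟨(((i : ℕ) : ℤ) + m).toNat, by omega⟩ with hv
  have hvars : v ∈ p.vars := by
    by_contra h
    rw [Dt_pos hpos p] at hi
    exact hi (pderiv_eq_zero_of_notMem_vars h)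
  refine ⟨v, by simpa using hvars, ?_⟩
  have hvz : (v : ℤ) = ((i : ℕ) : ℤ) + m := by
    simp [hv]; omega
  have hc : 0 < (v : ℤ) - m := by rw [hvz]; have := i.pos; omega
  simp only [g, dif_pos hc]
  apply PNat.coe_injective
  simp [hvz]

lemma Bop_support_finite (m : ℤ) (p : P) :
    (Function.support fun i : ℕ+ =>
      ((i : ℕ) : ℝ) • ((MvPolynomial.X i : P) * Dt (((i : ℕ) : ℤ) + m) p)).Finite := by
  apply Set.Finite.subset (Dt_support_finite m p)
  intro i hi
  simp only [Function.mem_support, Set.mem_setOf_eq] at hi ⊢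
  intro h
  apply hi
  rw [h, mul_zero, smul_zero]

lemma Bop_zero (m : ℤ) : Bop m 0 = 0 := by
  unfold Bop
  rw [finsum_eq_zero_of_forall_eq_zero]
  intro i
  rw [Dt_zero, mul_zero, smul_zero]

lemma Bop_add (m : ℤ) (p q : P) : Bop m (p + q) = Bop m p + Bop m q := by
  unfold Bop
  rw [← finsum_add_distrib (Bop_support_finite m p) (Bop_support_finite m q)]
  congr 1
  ext i
  rw [Dt_add, mul_add, smul_add]

lemma Bop_smul (m : ℤ) (c : ℝ) (p : P) : Bop m (c • p) = c • Bop m p := by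
  unfold Bop
  have : ∀ i : ℕ+, ((i:ℕ):ℝ) • ((X i : P) * Dt (((i:ℕ):ℤ) + m) (c • p))
      = c • (((i:ℕ):ℝ) • ((X i : P) * Dt (((i:ℕ):ℤ) + m) p)) := by
    intro i
    rw [Dt_smul, mul_smul_comm, smul_comm]
  simp only [this]
  exact (smul_finsum' c (Bop_support_finite m p)).symm

noncomputable def DtHom (m : ℤ) : P →+ P := AddMonoidHom.mk' (Dt m) (Dt_add m)

lemma Dt_finsum {ι : Type*} (l : ℤ) (f : ι → P) (hf : (Function.support f).Finite) :
    Dt l (∑ᶠ i, f i) = ∑ᶠ i, Dt l (f i) := (DtHom l).map_finsum hf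

lemma B_Dt (m l : ℤ) (p : P) :
    Bop m (Dt l p) - Dt l (Bop m p) = -((if 0 < l then (l : ℝ) else 0) • Dt (l + m) p) := by
  by_cases hl : 0 < l
  · set l' : ℕ+ := ⟨l.toNat, by omega⟩ with hl'
    have hcoe : ((l' : ℕ) : ℤ) = l := by simp [hl']; omega
    have hDl : ∀ q : P, Dt l q = pderiv l' q := fun q => Dt_pos hl q
    have expand : Dt l (Bop m p) = Bop m (Dt l p) +
        ∑ᶠ i : ℕ+, (if i = l' then ((i:ℕ):ℝ) • Dt (((i:ℕ):ℤ) + m) p else 0) := by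
      unfold Bop
      rw [Dt_finsum l _ (Bop_support_finite m p)]
      rw [← finsum_add_distrib (Bop_support_finite m (Dt l p))]
      · congr 1
        funext i
        rw [Dt_smul, hDl, pderiv_mul]
        rcases eq_or_ne i l' with rfl | hi
        · rw [pderiv_X_self, if_pos rfl, one_mul, ← hDl, Dt_Dt_comm]
          rw [smul_add, add_comm]
        · rw [pderiv_X_of_ne (fun h => hi (by exact h)), if_neg hi, zero_mul,
            add_zero, zero_add, ← hDl, Dt_Dt_comm]
      · apply Set.Finite.subset (Set.finite_singleton l')
        intro i hi
        simp only [Function.mem_support] at hi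
        by_contra h
        simp only [Set.mem_singleton_iff] at h
        exact hi (if_neg h)
    rw [expand]
    rw [finsum_eq_single _ l' (fun x hx => if_neg hx)]
    rw [if_pos rfl, if_pos hl, hcoe]
    have hR : ((l' : ℕ) : ℝ) = (l : ℝ) := by exact_mod_cast congrArg (Int.cast : ℤ → ℝ) hcoe
    rw [hR]
    abel
  · rw [Dt_nonpos hl p, Bop_zero, if_neg hl, zero_smul, neg_zero, zero_sub, neg_eq_zero]
    unfold Bop
    rw [Dt_finsum l _ (Bop_support_finite m p)]
    apply finsum_eq_zero_of_forall_eq_zero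
    intro i
    rw [Dt_nonpos hl]

lemma B_Xt (m a : ℤ) (p : P) :
    Bop m (Xt a p) - Xt a (Bop m p) =
      (if 0 < a then ((a - m : ℤ) : ℝ) else 0) • Xt (a - m) p := by
  by_cases ha : 0 < a
  · set a' : ℕ+ := ⟨a.toNat, by omega⟩ with ha'
    have hcoe : ((a' : ℕ) : ℤ) = a := by simp [ha']; omega
    have hXa : ∀ q : P, Xt a q = (X a' : P) * q := fun q => Xt_pos ha q
    have expand : Bop m (Xt a p) = Xt a (Bop m p) +
        ∑ᶠ i : ℕ+, (if ((i:ℕ):ℤ) = a - m then ((i:ℕ):ℝ) • ((X i : P) * p) else 0) := by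
      unfold Bop
      rw [hXa, hXa, mul_finsum _ _]
      have h1 : (Function.support fun i : ℕ+ =>
          (X a' : P) * (((i:ℕ):ℝ) • ((X i : P) * Dt (((i:ℕ):ℤ) + m) p))).Finite := by
        apply Set.Finite.subset (Bop_support_finite m p)
        intro i hi
        simp only [Function.mem_support] at hi ⊢
        intro h
        exact hi (by rw [h, mul_zero])
      have h2 : (Function.support fun i : ℕ+ =>
          (if ((i:ℕ):ℤ) = a - m then ((i:ℕ):ℝ) • ((X i : P) * p) else 0)).Finite := by
        by_cases hm : 0 < a - m
        · apply Set.Finite.subset (Set.finite_singleton (α := ℕ+) (⟨(a-m).toNat, by omega⟩ : ℕ+))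
          intro i hi
          simp only [Function.mem_support] at hi
          by_contra h
          apply hi
          rw [if_neg]
          intro hc
          apply h
          refine Set.mem_singleton_iff.mpr ?_
          apply Subtype.ext
          have hq : ((i:ℕ):ℤ) = (((a-m).toNat : ℕ) : ℤ) := by
            rw [Int.toNat_of_nonneg (by omega)]; exact hc
          exact_mod_cast hq
        · apply Set.Finite.subset (Set.finite_empty)
          intro i hi
          simp only [Function.mem_support] at hi
          exfalso
          apply hi
          rw [if_neg]
          intro hc
          have := i.pos
          omega
      rw [← finsum_add_distrib h1 h2]
      congr 1
      funext i
      rw [show (X a' : P) * p = Xt a p from (hXa p).symm, Dt_Xt_comm, hXa, mul_add, smul_add]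
      congr 1
      · rw [mul_smul_comm, ← mul_assoc, ← mul_assoc, mul_comm (X i : P) (X a' : P)]
      · by_cases hc : ((i:ℕ):ℤ) = a - m
        · have hcc : ((i:ℕ):ℤ) + m = a ∧ 0 < ((i:ℕ):ℤ) + m := by constructor <;> omega
          rw [if_pos hcc, if_pos hc]
        · have hcc : ¬ (((i:ℕ):ℤ) + m = a ∧ 0 < ((i:ℕ):ℤ) + m) := by
            intro h; exact hc (by omega)
          rw [if_neg hcc, if_neg hc, mul_zero, smul_zero]
    rw [expand]
    by_cases hm : 0 < a - m
    · set j : ℕ+ := ⟨(a-m).toNat, by omega⟩ with hj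
      have hjc : ((j:ℕ):ℤ) = a - m := by simp [hj]; omega
      rw [finsum_eq_single _ j (fun x hx => by
        rw [if_neg]; intro hc; exact hx (Subtype.ext (by
          exact_mod_cast (show ((x:ℕ):ℤ) = (((a-m).toNat : ℕ) : ℤ) by
            rw [Int.toNat_of_nonneg (by omega)]; exact hc))))]
      rw [if_pos hjc, if_pos ha]
      have hR : ((j : ℕ) : ℝ) = ((a - m : ℤ) : ℝ) := by exact_mod_cast congrArg (Int.cast : ℤ → ℝ) hjc
      rw [hR, Xt_pos hm]
      have : (⟨(a-m).toNat, by omega⟩ : ℕ+) = j := rfl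
      rw [this]
      abel
    · rw [finsum_eq_zero_of_forall_eq_zero (fun i => by
        rw [if_neg]; intro hc; have := i.pos; omega)]
      rw [Xt_nonpos hm, smul_zero]
      abel
  · rw [Xt_nonpos ha p, Bop_zero, Xt_nonpos ha, if_neg ha, zero_smul, sub_zero]

noncomputable def Aop (m : ℤ) (p : P) : P :=
  ∑ i ∈ Finset.Icc (1 : ℤ) (m - 1), Dt i (Dt (m - i) p)

noncomputable def Cop (m : ℤ) (p : P) : P :=
  ∑ i ∈ Finset.Icc (1 : ℤ) (-m - 1), ((i : ℝ) * ((-m - i : ℤ) : ℝ)) • Xt i (Xt (-m - i) p)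

lemma Aop_add (m : ℤ) (p q : P) : Aop m (p + q) = Aop m p + Aop m q := by
  unfold Aop
  rw [← Finset.sum_add_distrib]
  exact Finset.sum_congr rfl fun i _ => by rw [Dt_add, Dt_add]

lemma Aop_smul (m : ℤ) (c : ℝ) (p : P) : Aop m (c • p) = c • Aop m p := by
  unfold Aop
  rw [Finset.smul_sum]
  exact Finset.sum_congr rfl fun i _ => by rw [Dt_smul, Dt_smul]

lemma Cop_add (m : ℤ) (p q : P) : Cop m (p + q) = Cop m p + Cop m q := by
  unfold Cop
  rw [← Finset.sum_add_distrib]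
  exact Finset.sum_congr rfl fun i _ => by rw [Xt_add, Xt_add, smul_add]

lemma Cop_smul (m : ℤ) (c : ℝ) (p : P) : Cop m (c • p) = c • Cop m p := by
  unfold Cop
  rw [Finset.smul_sum]
  exact Finset.sum_congr rfl fun i _ => by rw [Xt_smul, Xt_smul, smul_comm]

lemma A_Dt (m l : ℤ) (p : P) : Aop m (Dt l p) = Dt l (Aop m p) := by
  unfold Aop
  rw [show Dt l (∑ i ∈ Finset.Icc (1:ℤ) (m-1), Dt i (Dt (m-i) p))
      = ∑ i ∈ Finset.Icc (1:ℤ) (m-1), Dt l (Dt i (Dt (m-i) p)) from map_sum (DtHom l) _ _]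
  exact Finset.sum_congr rfl fun i _ => by rw [Dt_Dt_comm l i, Dt_Dt_comm l (m-i)]

lemma C_Xt (m a : ℤ) (p : P) : Cop m (Xt a p) = Xt a (Cop m p) := by
  unfold Cop
  rw [show Xt a (∑ i ∈ Finset.Icc (1:ℤ) (-m-1), ((i:ℝ) * ((-m-i:ℤ):ℝ)) • Xt i (Xt (-m-i) p))
      = ∑ i ∈ Finset.Icc (1:ℤ) (-m-1), Xt a (((i:ℝ) * ((-m-i:ℤ):ℝ)) • Xt i (Xt (-m-i) p)) from
        map_sum (AddMonoidHom.mk' (Xt a) (Xt_add a)) _ _]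
  exact Finset.sum_congr rfl fun i _ => by
    rw [Xt_smul, Xt_Xt_comm a i, Xt_Xt_comm a (-m-i)]

lemma A_Xt (m a : ℤ) (p : P) :
    Aop m (Xt a p) - Xt a (Aop m p) =
      (if a ∈ Finset.Icc (1:ℤ) (m-1) then (2:ℝ) else 0) • Dt (m - a) p := by
  classical
  have expand : Aop m (Xt a p) = Xt a (Aop m p)
      + (∑ i ∈ Finset.Icc (1:ℤ) (m-1), if i = a then Dt (m - i) p else 0)
      + (∑ i ∈ Finset.Icc (1:ℤ) (m-1), if i = m - a then Dt i p else 0) := by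
    unfold Aop
    rw [show Xt a (∑ i ∈ Finset.Icc (1:ℤ) (m-1), Dt i (Dt (m-i) p))
        = ∑ i ∈ Finset.Icc (1:ℤ) (m-1), Xt a (Dt i (Dt (m-i) p)) from
          map_sum (AddMonoidHom.mk' (Xt a) (Xt_add a)) _ _]
    rw [← Finset.sum_add_distrib, ← Finset.sum_add_distrib]
    refine Finset.sum_congr rfl fun i hi => ?_
    simp only [Finset.mem_Icc] at hi
    rw [Dt_Xt_comm (m - i) a p, Dt_add, Dt_Xt_comm i a]
    congr 1
    · congr 1
      by_cases h : i = a
      · subst h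
        rw [if_pos ⟨rfl, by omega⟩, if_pos rfl]
      · rw [if_neg (by tauto), if_neg h]
    · by_cases h : m - i = a
      · rw [if_pos ⟨h, by omega⟩, if_pos (show i = m - a by omega)]
      · rw [if_neg (by tauto), Dt_zero, if_neg (by omega)]
  rw [expand]
  rw [Finset.sum_ite_eq' (Finset.Icc (1:ℤ) (m-1)) a (fun i => Dt (m - i) p)]
  rw [Finset.sum_ite_eq' (Finset.Icc (1:ℤ) (m-1)) (m - a) (fun i => Dt i p)]
  have hmem : (m - a) ∈ Finset.Icc (1:ℤ) (m-1) ↔ a ∈ Finset.Icc (1:ℤ) (m-1) := by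
    simp only [Finset.mem_Icc]; omega
  by_cases h : a ∈ Finset.Icc (1:ℤ) (m-1)
  · rw [if_pos h, if_pos (hmem.mpr h), if_pos h, two_smul]
    abel
  · rw [if_neg h, if_neg (fun hh => h (hmem.mp hh)), if_neg h, zero_smul]
    abel

lemma C_Dt (m l : ℤ) (p : P) :
    Cop m (Dt l p) - Dt l (Cop m p) =
      -((if l ∈ Finset.Icc (1:ℤ) (-m-1) then (2:ℝ) * ((l:ℝ) * ((-m-l:ℤ):ℝ)) else 0)
        • Xt (-m-l) p) := by
  classical
  have expand : Dt l (Cop m p) = Cop m (Dt l p)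
      + (∑ i ∈ Finset.Icc (1:ℤ) (-m-1),
          if i = -m-l then ((i:ℝ) * ((-m-i:ℤ):ℝ)) • Xt i p else 0)
      + (∑ i ∈ Finset.Icc (1:ℤ) (-m-1),
          if i = l then ((i:ℝ) * ((-m-i:ℤ):ℝ)) • Xt (-m-i) p else 0) := by
    unfold Cop
    rw [show Dt l (∑ i ∈ Finset.Icc (1:ℤ) (-m-1), ((i:ℝ) * ((-m-i:ℤ):ℝ)) • Xt i (Xt (-m-i) p))
        = ∑ i ∈ Finset.Icc (1:ℤ) (-m-1), Dt l (((i:ℝ) * ((-m-i:ℤ):ℝ)) • Xt i (Xt (-m-i) p)) from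
          map_sum (DtHom l) _ _]
    rw [← Finset.sum_add_distrib, ← Finset.sum_add_distrib]
    refine Finset.sum_congr rfl fun i hi => ?_
    simp only [Finset.mem_Icc] at hi
    rw [Dt_smul, Dt_Xt_comm l i, Dt_Xt_comm l (-m-i), Xt_add, apply_ite (Xt i), Xt_zero,
      smul_add, smul_add]
    congr 1
    · congr 1
      by_cases h : i = -m-l
      · rw [if_pos (by constructor <;> omega), if_pos h]
      · rw [if_neg (by rintro ⟨h1, h2⟩; omega), if_neg h, smul_zero]
    · by_cases h : i = l
      · rw [if_pos (by constructor <;> omega), if_pos h]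
      · rw [if_neg (by rintro ⟨h1, h2⟩; omega), if_neg h, smul_zero]
  rw [expand]
  rw [Finset.sum_ite_eq' (Finset.Icc (1:ℤ) (-m-1)) (-m-l)
      (fun i => ((i:ℝ) * ((-m-i:ℤ):ℝ)) • Xt i p)]
  rw [Finset.sum_ite_eq' (Finset.Icc (1:ℤ) (-m-1)) l
      (fun i => ((i:ℝ) * ((-m-i:ℤ):ℝ)) • Xt (-m-i) p)]
  have hmem : (-m-l) ∈ Finset.Icc (1:ℤ) (-m-1) ↔ l ∈ Finset.Icc (1:ℤ) (-m-1) := by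
    simp only [Finset.mem_Icc]; omega
  by_cases h : l ∈ Finset.Icc (1:ℤ) (-m-1)
  · rw [if_pos h, if_pos (hmem.mpr h), if_pos h]
    rw [show (-m - (-m-l) : ℤ) = l by ring]
    have : (((-m-l : ℤ):ℝ) * ((l:ℤ):ℝ)) • Xt (-m-l) p + ((l:ℝ) * ((-m-l:ℤ):ℝ)) • Xt (-m-l) p
        = ((2:ℝ) * ((l:ℝ) * ((-m-l:ℤ):ℝ))) • Xt (-m-l) p := by
      rw [← add_smul]
      congr 1
      push_cast
      ring
    rw [show ((l:ℤ):ℝ) = (l:ℝ) from rfl] at this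
    rw [← this]
    abel
  · rw [if_neg h, if_neg (fun hh => h (hmem.mp hh)), if_neg h, zero_smul]
    abel

/-- `𝕁^{(1)}_{m,n} = ∂/∂t_m + (−m) t_{−m}· + n δ_{m,0}`. -/
noncomputable def J1 (m : ℤ) (n : ℝ) (p : MvPolynomial ℕ+ ℝ) : MvPolynomial ℕ+ ℝ :=
  Dt m p + ((-m : ℤ) : ℝ) • Xt (-m) p + (if m = 0 then n else 0) • p

/-- `𝕁^{(2)}_{m,n} = (1/2)(Σ_{i+j=m} ∂²/∂t_i∂t_j + 2Σ_{i≥1} i t_i ∂/∂t_{i+m}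
+ Σ_{i+j=−m} (i t_i)(j t_j)·) + (n+(m+1)/2)(∂/∂t_m + (−m)t_{−m}·) + (n(n+1)/2)δ_{m,0}`;
applied to a polynomial, all the sums have only finitely many nonzero terms. -/
noncomputable def J2 (m : ℤ) (n : ℝ) (p : MvPolynomial ℕ+ ℝ) : MvPolynomial ℕ+ ℝ :=
  (1 / 2 : ℝ) • ((∑ i ∈ Finset.Icc (1 : ℤ) (m - 1), Dt i (Dt (m - i) p))
      + (2 : ℝ) • (∑ᶠ i : ℕ+, ((i : ℕ) : ℝ) •
          ((MvPolynomial.X i : MvPolynomial ℕ+ ℝ) * Dt (((i : ℕ) : ℤ) + m) p))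
      + (∑ i ∈ Finset.Icc (1 : ℤ) (-m - 1), ((i : ℝ) * ((-m - i : ℤ) : ℝ)) • Xt i (Xt (-m - i) p)))
    + (n + ((m : ℝ) + 1) / 2) • (Dt m p + ((-m : ℤ) : ℝ) • Xt (-m) p)
    + (if m = 0 then n * (n + 1) / 2 else 0) • p

lemma J2_eq (m : ℤ) (n : ℝ) (p : P) :
    J2 m n p = (1 / 2 : ℝ) • (Aop m p + (2 : ℝ) • Bop m p + Cop m p)
      + (n + ((m : ℝ) + 1) / 2) • (Dt m p + ((-m : ℤ) : ℝ) • Xt (-m) p)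
      + (if m = 0 then n * (n + 1) / 2 else 0) • p := rfl

lemma J2_add (m : ℤ) (n : ℝ) (p q : P) : J2 m n (p + q) = J2 m n p + J2 m n q := by
  simp only [J2_eq, Aop_add, Bop_add, Cop_add, Dt_add, Xt_add, smul_add]
  abel

lemma J2_smul (m : ℤ) (n : ℝ) (c : ℝ) (p : P) : J2 m n (c • p) = c • J2 m n p := by
  simp only [J2_eq, Aop_smul, Bop_smul, Cop_smul, Dt_smul, Xt_smul]
  module


set_option linter.unusedTactic false in
set_option maxHeartbeats 2000000 in
/-- The mixed relation
`[𝕁^{(2)}_{k,n}, 𝕁^{(1)}_{l,n}] = −l 𝕁^{(1)}_{k+l,n} + (k(k+1)/2) δ_{k,−l} id`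
as linear endomorphisms of `ℝ[t_1, t_2, …]` (stated pointwise). -/
theorem mixed_virasoro_heisenberg_relation (k l : ℤ) (n : ℝ) (p : MvPolynomial ℕ+ ℝ) :
    J2 k n (J1 l n p) - J1 l n (J2 k n p) =
      (-(l : ℝ)) • J1 (k + l) n p +
        (if k = -l then ((k : ℝ) * ((k : ℝ) + 1) / 2) else 0) • p := by
  have hAD : Aop k (Dt l p) = Dt l (Aop k p) := A_Dt k l p
  have hBD : Bop k (Dt l p) = Dt l (Bop k p)
      - (if 0 < l then (l:ℝ) else 0) • Dt (k + l) p := by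
    have h := B_Dt k l p
    rw [show l + k = k + l by ring] at h
    rw [sub_eq_iff_eq_add] at h
    rw [h]; abel
  have hCD : Cop k (Dt l p) = Dt l (Cop k p)
      - (if l ∈ Finset.Icc (1:ℤ) (-k-1) then (2:ℝ) * ((l:ℝ) * ((-(k+l):ℤ):ℝ)) else 0)
        • Xt (-(k+l)) p := by
    have h := C_Dt k l p
    rw [show (-k - l : ℤ) = -(k+l) by ring] at h
    rw [sub_eq_iff_eq_add] at h
    rw [h]; abel
  have hDD : Dt k (Dt l p) = Dt l (Dt k p) := Dt_Dt_comm k l p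
  have hXD : Xt (-k) (Dt l p) = Dt l (Xt (-k) p) - (if l = -k ∧ 0 < l then p else 0) := by
    rw [Dt_Xt_comm l (-k) p]; abel
  have hAX : Aop k (Xt (-l) p) = Xt (-l) (Aop k p)
      + (if -l ∈ Finset.Icc (1:ℤ) (k-1) then (2:ℝ) else 0) • Dt (k+l) p := by
    have h := A_Xt k (-l) p
    rw [show (k - -l : ℤ) = k + l by ring] at h
    rw [sub_eq_iff_eq_add] at h
    rw [h]; abel
  have hBX : Bop k (Xt (-l) p) = Xt (-l) (Bop k p)
      + (if 0 < -l then ((-(k+l) : ℤ):ℝ) else 0) • Xt (-(k+l)) p := by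
    have h := B_Xt k (-l) p
    rw [show (-l - k : ℤ) = -(k+l) by ring] at h
    rw [sub_eq_iff_eq_add] at h
    rw [h]; abel
  have hCX : Cop k (Xt (-l) p) = Xt (-l) (Cop k p) := C_Xt k (-l) p
  have hDX : Dt k (Xt (-l) p) = Xt (-l) (Dt k p) + (if k = -l ∧ 0 < k then p else 0) :=
    Dt_Xt_comm k (-l) p
  have hXX : Xt (-k) (Xt (-l) p) = Xt (-l) (Xt (-k) p) := Xt_Xt_comm (-k) (-l) p
  have e1 : J2 k n (J1 l n p) = J2 k n (Dt l p) + ((-l:ℤ):ℝ) • J2 k n (Xt (-l) p)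
      + (if l = 0 then n else 0) • J2 k n p := by
    rw [show J1 l n p = Dt l p + ((-l:ℤ):ℝ) • Xt (-l) p + (if l = 0 then n else 0) • p from rfl,
      J2_add, J2_add, J2_smul, J2_smul]
  have e2 : J1 l n (J2 k n p) = Dt l (J2 k n p) + ((-l:ℤ):ℝ) • Xt (-l) (J2 k n p)
      + (if l = 0 then n else 0) • J2 k n p := rfl
  have e3 : J1 (k+l) n p = Dt (k+l) p + ((-(k+l):ℤ):ℝ) • Xt (-(k+l)) p
      + (if k + l = 0 then n else 0) • p := rfl
  rw [e1, e2, e3]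
  simp only [J2_eq]
  simp only [Dt_add, Dt_smul, Xt_add, Xt_smul]
  simp only [hAD, hBD, hCD, hDD, hXD, hAX, hBX, hCX, hDX, hXX]
  simp only [Finset.mem_Icc]
  by_cases hk0 : k = -l
  · subst hk0
    rw [Dt_nonpos (by simp : ¬ 0 < -l + l) p, Xt_nonpos (by omega : ¬ 0 < -(-l + l)) p]
    rcases lt_trichotomy l 0 with hl | hl | hl
    · push_cast
      split_ifs <;> first | (exfalso; omega) | module
    · subst hl
      push_cast
      split_ifs <;> first | (exfalso; omega) | module
    · push_cast
      split_ifs <;> first | (exfalso; omega) | module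
  · rw [if_neg (show ¬(l = -k ∧ 0 < l) by omega),
      if_neg (show ¬(k = -l ∧ 0 < k) by omega),
      if_neg hk0, if_neg (show ¬(k + l = 0) by omega)]
    by_cases h1 : 0 < k + l
    · rw [Xt_nonpos (show ¬ 0 < -(k + l) by omega) p]
      rcases lt_trichotomy l 0 with hl | hl | hl
      · push_cast
        split_ifs <;> first | (exfalso; omega) | module
      · subst hl
        push_cast
        split_ifs <;> first | (exfalso; omega) | module
      · push_cast
        split_ifs <;> first | (exfalso; omega) | module
    · rw [Dt_nonpos h1 p]
      rcases lt_trichotomy l 0 with hl | hl | hl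
      · push_cast
        split_ifs <;> first | (exfalso; omega) | module
      · subst hl
        push_cast
        split_ifs <;> first | (exfalso; omega) | module
      · push_cast
        split_ifs <;> first | (exfalso; omega) | module
end

section
/- For every integer m ≥ 1 and every c ∈ ℝ, det[ p_{i+j}(c) ]_{0≤i,j≤m−1} = ∏_{i=0}^{m−1} i!, where p_n(c) := e^{−c²/2} · (d/dy)^n (e^{y²/2}) |_{y=c}. -/
open Polynomial Finset Matrix

noncomputable def Hrm : ℕ → Polynomial ℝ
  | 0 => 1
  | n + 1 => derivative (Hrm n) + X * Hrm n

noncomputable def Twt (p : Polynomial ℝ) : Polynomial ℝ := derivative p + X * p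

lemma Hrm_succ (n : ℕ) : Hrm (n + 1) = Twt (Hrm n) := rfl

lemma Top_add (p q : Polynomial ℝ) : Twt (p + q) = Twt p + Twt q := by
  simp [Twt]; ring

lemma Top_nsmul (a : ℕ) (p : Polynomial ℝ) : Twt (a • p) = a • Twt p := by
  simp only [Twt, derivative_smul, smul_add]
  congr 1
  exact (mul_smul_comm a X p)

lemma Top_mul (p q : Polynomial ℝ) : Twt (p * q) = derivative p * q + p * Twt q := by
  simp [Twt, derivative_mul]; ring

lemma Hrm_derivative : ∀ n : ℕ, derivative (Hrm n) = n • Hrm (n - 1)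
  | 0 => by simp [Hrm]
  | 1 => by simp [Hrm]
  | (n + 2) => by
      have ih := Hrm_derivative (n + 1)
      show derivative (Hrm ((n+1) + 1)) = (n+2) • Hrm (n + 1)
      rw [Hrm, derivative_add, derivative_mul, ih, derivative_X, one_mul]
      simp only [Nat.add_sub_cancel] at *
      have h1 : Hrm (n + 1) = derivative (Hrm n) + X * Hrm n := rfl
      rw [derivative_smul, Hrm_derivative n, h1, Hrm_derivative n]
      simp only [nsmul_eq_mul]
      push_cast
      ring

lemma Top_iterate_Hrm (m n : ℕ) : Twt^[m] (Hrm n) = Hrm (m + n) := by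
  induction m generalizing n with
  | zero => simp
  | succ m ih =>
      rw [Function.iterate_succ_apply, ← Hrm_succ, ih]
      congr 1
      omega

lemma Twt_sum (s : Finset ℕ) (f : ℕ → Polynomial ℝ) :
    Twt (∑ k ∈ s, f k) = ∑ k ∈ s, Twt (f k) := by
  simp [Twt, derivative_sum, Finset.mul_sum, Finset.sum_add_distrib]

lemma Twt_iterate_mul (p q : Polynomial ℝ) (m : ℕ) : Twt^[m] (p * q) =
    ∑ k ∈ range (m+1), m.choose k • (derivative^[k] p * Twt^[m-k] q) := by
  induction m with
  | zero => simp
  | succ m IH =>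
    have step : Twt^[m+1] (p * q)
        = (∑ k ∈ range (m+1), m.choose k • (derivative^[k+1] p * Twt^[m-k] q))
        + ∑ k ∈ range (m+1), m.choose k • (derivative^[k] p * Twt (Twt^[m-k] q)) := by
      rw [Function.iterate_succ_apply', IH, Twt_sum, ← sum_add_distrib]
      refine sum_congr rfl fun k hk => ?_
      rw [Top_nsmul, Top_mul, smul_add, Function.iterate_succ_apply']
    rw [step]
    have hB : (∑ k ∈ range (m+2), m.choose k • (derivative^[k] p * Twt^[m+1-k] q))
        = ∑ k ∈ range (m+1), m.choose k • (derivative^[k] p * Twt (Twt^[m-k] q)) := by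
      rw [sum_range_succ, Nat.choose_succ_self, zero_smul, add_zero]
      refine sum_congr rfl fun k hk => ?_
      rw [mem_range] at hk
      have hk' : m + 1 - k = (m - k) + 1 := by omega
      rw [hk', Function.iterate_succ_apply']
    rw [← hB, sum_range_succ' _ (m+1), sum_range_succ' _ (m+1)]
    simp only [Nat.succ_sub_succ, Nat.choose_succ_succ, add_smul, Nat.choose_zero_right,
      Nat.sub_zero, Function.iterate_zero_apply, one_smul, sum_add_distrib]
    abel

lemma iterate_derivative_Hrm (n : ℕ) : ∀ k : ℕ,
    derivative^[k] (Hrm n) = (k.factorial * n.choose k) • Hrm (n - k)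
  | 0 => by simp
  | (k+1) => by
    rw [Function.iterate_succ_apply', iterate_derivative_Hrm n k, derivative_smul,
      Hrm_derivative, smul_smul]
    have h1 : k.factorial * n.choose k * (n - k) = (k+1).factorial * n.choose (k+1) := by
      rw [Nat.factorial_succ,
        show (k+1) * k.factorial * n.choose (k+1) = k.factorial * (n.choose (k+1) * (k+1)) by ring,
        Nat.choose_succ_right_eq]
      ring
    rw [h1, Nat.sub_sub]

lemma Hrm_add_eq (i j : ℕ) : Hrm (i + j) =
    ∑ k ∈ range (i+1), (i.choose k * (k.factorial * j.choose k)) • (Hrm (j - k) * Hrm (i - k)) := by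
  have h := Twt_iterate_mul (Hrm j) 1 i
  rw [mul_one, Top_iterate_Hrm] at h
  rw [h]
  refine sum_congr rfl fun k hk => ?_
  have h1 : (1 : Polynomial ℝ) = Hrm 0 := rfl
  rw [iterate_derivative_Hrm, h1, Top_iterate_Hrm, Nat.add_zero, smul_mul_assoc, smul_smul]

lemma iteratedDeriv_exp_sq (n : ℕ) :
    iteratedDeriv n (fun y : ℝ => Real.exp (y ^ 2 / 2)) =
      fun c => (Hrm n).eval c * Real.exp (c ^ 2 / 2) := by
  induction n with
  | zero => simp [Hrm]
  | succ n IH =>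
    rw [iteratedDeriv_succ, IH]
    funext c
    have hexp : HasDerivAt (fun y : ℝ => Real.exp (y ^ 2 / 2)) (Real.exp (c ^ 2 / 2) * c) c := by
      have h1 : HasDerivAt (fun y : ℝ => y ^ 2 / 2) (c) c := by
        simpa using (hasDerivAt_pow 2 c).div_const 2
      simpa using h1.exp
    have h2 : HasDerivAt (fun y : ℝ => (Hrm n).eval y * Real.exp (y ^ 2 / 2))
        ((derivative (Hrm n)).eval c * Real.exp (c ^ 2 / 2)
          + (Hrm n).eval c * (Real.exp (c ^ 2 / 2) * c)) c :=
      ((Hrm n).hasDerivAt c).mul hexp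
    rw [h2.deriv]
    show _ = (derivative (Hrm n) + X * Hrm n).eval c * Real.exp (c ^ 2 / 2)
    simp only [eval_add, eval_mul, eval_X]
    ring

lemma eval_Hrm_add (i j mm : ℕ) (him : i < mm) (c : ℝ) :
    ∑ k ∈ range mm,
        (if k ≤ i then ((i.choose k : ℝ)) * (Hrm (i - k)).eval c else 0) * (k.factorial : ℝ)
          * (if k ≤ j then ((j.choose k : ℝ)) * (Hrm (j - k)).eval c else 0)
      = (Hrm (i + j)).eval c := by
  have hsub : range (i+1) ⊆ range mm := by
    intro x hx; rw [mem_range] at *; omega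
  rw [← Finset.sum_subset hsub (fun x hx hx' => by
    rw [mem_range] at hx'
    have hxi : ¬ x ≤ i := by omega
    simp [hxi])]
  rw [Hrm_add_eq i j, eval_finset_sum]
  refine sum_congr rfl fun k hk => ?_
  rw [mem_range] at hk
  have hki : k ≤ i := by omega
  by_cases hkj : k ≤ j
  · simp only [hki, hkj, if_true, nsmul_eq_mul, eval_mul, eval_natCast]
    push_cast
    ring
  · have hz : j.choose k = 0 := Nat.choose_eq_zero_of_lt (by omega)
    simp [hki, hkj, hz]

/-- The `m×m` Hankel determinant of the polynomials `p_n(c) = e^{−c²/2} (d/dy)^n e^{y²/2}|_{y=c}`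
equals `∏_{i=0}^{m−1} i!`, independently of `c`. -/
theorem hankel_det_hermite (m : ℕ) (hm : 1 ≤ m) (c : ℝ) :
    Matrix.det (Matrix.of fun i j : Fin m =>
        Real.exp (-c ^ 2 / 2) * iteratedDeriv ((i : ℕ) + (j : ℕ)) (fun y => Real.exp (y ^ 2 / 2)) c) =
      ∏ i ∈ Finset.range m, (i.factorial : ℝ) := by
  have hexp : ∀ n : ℕ, Real.exp (-c ^ 2 / 2) * iteratedDeriv n (fun y => Real.exp (y ^ 2 / 2)) c
      = (Hrm n).eval c := by
    intro n
    rw [iteratedDeriv_exp_sq]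
    rw [show Real.exp (-c ^ 2 / 2) * ((Hrm n).eval c * Real.exp (c ^ 2 / 2))
        = (Hrm n).eval c * (Real.exp (-c ^ 2 / 2 + c ^ 2 / 2)) by rw [Real.exp_add]; ring]
    rw [neg_div, neg_add_cancel, Real.exp_zero, mul_one]
  set A : Matrix (Fin m) (Fin m) ℝ := Matrix.of fun i k : Fin m =>
    if (k : ℕ) ≤ (i : ℕ) then (((i : ℕ).choose k : ℝ)) * (Hrm ((i : ℕ) - k)).eval c else 0
    with hAdef
  have hM : (Matrix.of fun i j : Fin m =>
      Real.exp (-c ^ 2 / 2) * iteratedDeriv ((i : ℕ) + (j : ℕ)) (fun y => Real.exp (y ^ 2 / 2)) c)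
      = A * Matrix.diagonal (fun k : Fin m => ((k : ℕ).factorial : ℝ)) * Aᵀ := by
    ext i j
    rw [Matrix.of_apply, hexp, Matrix.mul_apply]
    simp only [Matrix.mul_diagonal, Matrix.transpose_apply, hAdef, Matrix.of_apply]
    rw [← eval_Hrm_add (i : ℕ) (j : ℕ) m i.isLt c]
    exact .symm (Fin.sum_univ_eq_sum_range (fun k =>
      (if k ≤ (i : ℕ) then (((i : ℕ).choose k : ℝ)) * (Hrm ((i : ℕ) - k)).eval c else 0)
        * (k.factorial : ℝ)
        * (if k ≤ (j : ℕ) then (((j : ℕ).choose k : ℝ)) * (Hrm ((j : ℕ) - k)).eval c else 0)) m)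
  rw [hM, Matrix.det_mul, Matrix.det_mul, Matrix.det_transpose, Matrix.det_diagonal]
  have hAtri : A.BlockTriangular OrderDual.toDual := by
    intro i j hij
    have hij' : (i : ℕ) < (j : ℕ) := hij
    simp only [hAdef, Matrix.of_apply]
    rw [if_neg (by omega)]
  rw [Matrix.det_of_lowerTriangular A hAtri]
  have hdiag : ∀ i : Fin m, A i i = 1 := by
    intro i
    simp [hAdef, Hrm]
  simp only [hdiag]
  rw [Finset.prod_const_one, one_mul, mul_one]
  exact Fin.prod_univ_eq_prod_range (fun k => (k.factorial : ℝ)) m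
end

section
/- For every integer m ≥ 1 and every c ∈ ℝ, det[ μ_{i+j}(c) ]_{0≤i,j≤m−1} = (2π)^{m/2} · e^{m c²/2} · ∏_{i=0}^{m−1} i!, where μ_n(c) := ∫_ℝ x^n e^{−x²/2 + cx} dx. -/
open Polynomial MeasureTheory Real Filter Matrix

noncomputable section

namespace HankelGauss

def Q (k : ℕ) : ℝ[X] := (hermite k).map (Int.castRingHom ℝ)

lemma Q_monic (k : ℕ) : (Q k).Monic := (hermite_monic k).map _

lemma Q_natDegree (k : ℕ) : (Q k).natDegree = k := by
  rw [Q, (hermite_monic k).natDegree_map, natDegree_hermite]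

lemma integrable_pow_gauss (n : ℕ) :
    Integrable fun x : ℝ => x ^ n * Real.exp (-x ^ 2 / 2) := by
  have h := integrable_rpow_mul_exp_neg_mul_sq (b := (1:ℝ)/2) (by norm_num)
      (s := (n : ℝ)) (lt_of_lt_of_le (by norm_num) (Nat.cast_nonneg n))
  refine h.congr (Filter.Eventually.of_forall fun x => ?_)
  show x ^ (n : ℝ) * Real.exp (-(1/2 : ℝ) * x ^ 2) = x ^ n * Real.exp (-x ^ 2 / 2)
  rw [Real.rpow_natCast, show -(1/2 : ℝ) * x ^ 2 = -x ^ 2 / 2 by ring]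

lemma integrable_poly_gauss (p : ℝ[X]) :
    Integrable fun x : ℝ => p.eval x * Real.exp (-x ^ 2 / 2) := by
  induction p using Polynomial.induction_on' with
  | add p q hp hq => simp only [eval_add, add_mul]; exact hp.add hq
  | monomial n a => simpa [eval_monomial, mul_assoc] using (integrable_pow_gauss n).const_mul a

lemma exp_shift (c x : ℝ) :
    Real.exp (-x ^ 2 / 2 + c * x) = Real.exp (c ^ 2 / 2) * Real.exp (-(x - c) ^ 2 / 2) := by
  rw [← Real.exp_add]; congr 1; ring

lemma integrable_poly_gauss' (p : ℝ[X]) (c : ℝ) :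
    Integrable fun x : ℝ => p.eval x * Real.exp (-x ^ 2 / 2 + c * x) := by
  have h := (((integrable_poly_gauss (p.comp (X + C c))).const_mul
      (Real.exp (c ^ 2 / 2)))).comp_sub_right c
  refine h.congr (Filter.Eventually.of_forall fun x => ?_)
  show Real.exp (c ^ 2 / 2) * ((p.comp (X + C c)).eval (x - c) * Real.exp (-(x - c) ^ 2 / 2)) = _
  simp only [eval_comp, eval_add, eval_X, eval_C, sub_add_cancel]
  rw [exp_shift c x]; ring

lemma integrable_hh (p q : ℝ[X]) :
    Integrable fun x : ℝ => p.eval x * (q.eval x * Real.exp (-x ^ 2 / 2)) := by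
  simpa [eval_mul, mul_assoc] using integrable_poly_gauss (p * q)

lemma integral_shift (p : ℝ[X]) (c : ℝ) :
    ∫ x : ℝ, p.eval x * Real.exp (-x ^ 2 / 2 + c * x)
      = Real.exp (c ^ 2 / 2) * ∫ y : ℝ, p.eval (y + c) * Real.exp (-y ^ 2 / 2) := by
  rw [← MeasureTheory.integral_const_mul,
    ← MeasureTheory.integral_add_right_eq_self
      (fun x => p.eval x * Real.exp (-x ^ 2 / 2 + c * x)) c]
  congr 1; funext y
  show p.eval (y + c) * Real.exp (-(y + c) ^ 2 / 2 + c * (y + c)) = _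
  rw [exp_shift c (y + c), add_sub_cancel_right]; ring

lemma hasDerivAt_gauss (x : ℝ) :
    HasDerivAt (fun x : ℝ => Real.exp (-x ^ 2 / 2)) (-x * Real.exp (-x ^ 2 / 2)) x := by
  have h : HasDerivAt (fun x : ℝ => -x ^ 2 / 2) (-x) x := by
    have := ((hasDerivAt_pow 2 x).neg).div_const 2
    refine this.congr_deriv ?_
    rw [show (2:ℕ) - 1 = 1 from rfl]; push_cast; ring
  have := h.exp
  convert this using 1; ring

lemma hermite_derivative (n : ℕ) :
    derivative (hermite (n + 1)) = C ((n : ℤ) + 1) * hermite n := by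
  induction n with
  | zero => simp [hermite_one, hermite_zero]
  | succ n ih =>
      rw [hermite_succ (n + 1), derivative_sub, derivative_mul, derivative_X, ih,
        derivative_C_mul, hermite_succ n]
      push_cast [C_add, C_1]
      ring

lemma Q_derivative (n : ℕ) :
    derivative (Q (n + 1)) = C ((n : ℝ) + 1) * Q n := by
  rw [Q, derivative_map, hermite_derivative, Polynomial.map_mul, map_C]
  simp [Q]

lemma step (n m : ℕ) :
    ∫ x : ℝ, (Q (n + 1)).eval x * (Q m).eval x * Real.exp (-x ^ 2 / 2)
      = ∫ x : ℝ, (derivative (Q m)).eval x * ((Q n).eval x * Real.exp (-x ^ 2 / 2)) := by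
  have hQsucc : ∀ x : ℝ, (Q (n + 1)).eval x
      = x * (Q n).eval x - (derivative (Q n)).eval x := by
    intro x
    rw [Q, hermite_succ, Polynomial.map_sub, Polynomial.map_mul, map_X, ← derivative_map,
      eval_sub, eval_mul, eval_X]
    rfl
  have hu : ∀ x : ℝ, HasDerivAt (fun x : ℝ => (Q m).eval x) ((derivative (Q m)).eval x) x :=
    fun x => Polynomial.hasDerivAt _ x
  have hv : ∀ x : ℝ, HasDerivAt (fun x : ℝ => (Q n).eval x * Real.exp (-x ^ 2 / 2))
      (-((Q (n + 1)).eval x * Real.exp (-x ^ 2 / 2))) x := by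
    intro x
    have h := (Polynomial.hasDerivAt (Q n) x).mul (hasDerivAt_gauss x)
    refine h.congr_deriv ?_
    rw [hQsucc x]; ring
  have huv' : Integrable ((fun x : ℝ => (Q m).eval x) *
      fun x : ℝ => -((Q (n + 1)).eval x * Real.exp (-x ^ 2 / 2))) := by
    have h := (integrable_hh (Q m) (Q (n + 1))).neg
    refine h.congr (Filter.Eventually.of_forall fun x => ?_)
    show -((Q m).eval x * ((Q (n + 1)).eval x * Real.exp (-x ^ 2 / 2))) = _
    simp only [Pi.mul_apply]
    ring
  have hu'v : Integrable ((fun x : ℝ => (derivative (Q m)).eval x) *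
      fun x : ℝ => (Q n).eval x * Real.exp (-x ^ 2 / 2)) := by
    have h := integrable_hh (derivative (Q m)) (Q n)
    refine h.congr (Filter.Eventually.of_forall fun x => rfl)
  have huv : Integrable ((fun x : ℝ => (Q m).eval x) *
      fun x : ℝ => (Q n).eval x * Real.exp (-x ^ 2 / 2)) := by
    have h := integrable_hh (Q m) (Q n)
    refine h.congr (Filter.Eventually.of_forall fun x => rfl)
  have key := MeasureTheory.integral_mul_deriv_eq_deriv_mul_of_integrable (fun x _ => hu x) (fun x _ => hv x) huv' hu'v huv
  have key2 : -∫ x : ℝ, (Q m).eval x * ((Q (n + 1)).eval x * Real.exp (-x ^ 2 / 2))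
      = -∫ x : ℝ, (derivative (Q m)).eval x * ((Q n).eval x * Real.exp (-x ^ 2 / 2)) := by
    rw [← key, ← MeasureTheory.integral_neg]
    congr 1; funext x; ring
  have key3 := neg_injective key2
  rw [← key3]
  congr 1; funext x; ring

lemma integral_gauss : ∫ x : ℝ, Real.exp (-x ^ 2 / 2) = Real.sqrt (2 * π) := by
  have h := integral_gaussian (1/2 : ℝ)
  rw [show ((π / (1/2) : ℝ)) = 2 * π by ring] at h
  rw [← h]
  congr 1; funext x; congr 1; ring

lemma orth_symm (a b : ℕ) :
    (∫ x : ℝ, (Q a).eval x * (Q b).eval x * Real.exp (-x ^ 2 / 2))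
      = ∫ x : ℝ, (Q b).eval x * (Q a).eval x * Real.exp (-x ^ 2 / 2) := by
  congr 1; funext x; ring

lemma orth (n m : ℕ) :
    ∫ x : ℝ, (Q n).eval x * (Q m).eval x * Real.exp (-x ^ 2 / 2)
      = if n = m then (n.factorial : ℝ) * Real.sqrt (2 * π) else 0 := by
  induction n generalizing m with
  | zero =>
      cases m with
      | zero =>
          simp only [if_pos rfl, Nat.factorial_zero, Nat.cast_one, one_mul]
          rw [← integral_gauss]
          congr 1; funext x
          simp [Q, hermite_zero]
      | succ m =>
          rw [orth_symm, step m 0, if_neg (by omega)]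
          have : ∀ x : ℝ, (derivative (Q 0)).eval x * ((Q m).eval x * Real.exp (-x ^ 2 / 2)) = 0 := by
            intro x; simp [Q, hermite_zero]
          simp only [this, MeasureTheory.integral_zero]
  | succ n ih =>
      cases m with
      | zero =>
          rw [step n 0, if_neg (by omega)]
          have : ∀ x : ℝ, (derivative (Q 0)).eval x * ((Q n).eval x * Real.exp (-x ^ 2 / 2)) = 0 := by
            intro x; simp [Q, hermite_zero]
          simp only [this, MeasureTheory.integral_zero]
      | succ m =>
          rw [step n (m + 1), Q_derivative m]
          have h1 : ∫ x : ℝ, (C ((m : ℝ) + 1) * Q m).eval x * ((Q n).eval x * Real.exp (-x ^ 2 / 2))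
              = ((m : ℝ) + 1) * ∫ x : ℝ, (Q n).eval x * (Q m).eval x * Real.exp (-x ^ 2 / 2) := by
            rw [← MeasureTheory.integral_const_mul]
            congr 1; funext x; simp only [eval_mul, eval_C]; ring
          rw [h1, ih m]
          by_cases h : n = m
          · subst h
            rw [if_pos rfl, if_pos rfl, Nat.factorial_succ]
            push_cast
            ring
          · rw [if_neg h, if_neg (by omega), mul_zero]

lemma integrable_mono_mono (a b : ℝ) (k l : ℕ) (c : ℝ) :
    Integrable fun x : ℝ => (a * x ^ k) * ((b * x ^ l) * Real.exp (-x ^ 2 / 2 + c * x)) := by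
  have h := integrable_poly_gauss' (C (a * b) * X ^ (k + l)) c
  refine h.congr (Filter.Eventually.of_forall fun x => ?_)
  simp only [eval_mul, eval_pow, eval_C, eval_X]
  ring

lemma entry_integral (c : ℝ) (i j : ℕ) :
    ∫ x : ℝ, ((Q i).comp (X - C c)).eval x * ((Q j).comp (X - C c)).eval x *
        Real.exp (-x ^ 2 / 2 + c * x)
      = Real.exp (c ^ 2 / 2) *
          (if i = j then (i.factorial : ℝ) * Real.sqrt (2 * π) else 0) := by
  have h0 : (∫ x : ℝ, ((Q i).comp (X - C c)).eval x * ((Q j).comp (X - C c)).eval x *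
        Real.exp (-x ^ 2 / 2 + c * x))
      = ∫ x : ℝ, ((Q i * Q j).comp (X - C c)).eval x * Real.exp (-x ^ 2 / 2 + c * x) := by
    congr 1; funext x; rw [mul_comp, eval_mul]
  rw [h0, integral_shift]
  congr 1
  have h1 : (∫ y : ℝ, ((Q i * Q j).comp (X - C c)).eval (y + c) * Real.exp (-y ^ 2 / 2))
      = ∫ y : ℝ, (Q i).eval y * (Q j).eval y * Real.exp (-y ^ 2 / 2) := by
    congr 1; funext y
    rw [eval_comp, eval_sub, eval_X, eval_C, add_sub_cancel_right, eval_mul]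
  rw [h1, orth]

lemma key_det (m : ℕ) (c : ℝ) :
    (Matrix.of fun i j : Fin m =>
        ∫ x : ℝ, x ^ ((i : ℕ) + (j : ℕ)) * Real.exp (-x ^ 2 / 2 + c * x)).det
      = ∏ i : Fin m, (Real.exp (c ^ 2 / 2) * (((i : ℕ).factorial : ℝ) * Real.sqrt (2 * π))) := by
  classical
  set Mmat : Matrix (Fin m) (Fin m) ℝ := Matrix.of fun i j : Fin m =>
      ∫ x : ℝ, x ^ ((i : ℕ) + (j : ℕ)) * Real.exp (-x ^ 2 / 2 + c * x) with hMmat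
  set P : Fin m → ℝ[X] := fun i => (Q (i : ℕ)).comp (X - C c) with hP
  set L : Matrix (Fin m) (Fin m) ℝ := Matrix.of fun i k : Fin m => (P i).coeff k with hL
  have hPdeg : ∀ i : Fin m, (P i).natDegree = (i : ℕ) := fun i => by
    rw [hP, natDegree_comp, Q_natDegree, natDegree_X_sub_C, mul_one]
  have hPmon : ∀ i : Fin m, (P i).Monic := fun i => (Q_monic _).comp_X_sub_C c
  -- L is lower triangular with unit diagonal
  have hdetL : L.det = 1 := by
    have htri : L.BlockTriangular OrderDual.toDual := by
      intro u v huv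
      show (P u).coeff v = 0
      exact coeff_eq_zero_of_natDegree_lt (by rw [hPdeg u]; exact huv)
    rw [Matrix.det_of_lowerTriangular L htri]
    have : ∀ i : Fin m, L i i = 1 := by
      intro i
      show (P i).coeff i = 1
      have h := (hPmon i).coeff_natDegree
      rwa [hPdeg i] at h
    simp [this]
  -- the key factorization
  have hLML : L * Mmat * Lᵀ = Matrix.diagonal
      (fun i : Fin m => Real.exp (c ^ 2 / 2) * (((i : ℕ).factorial : ℝ) * Real.sqrt (2 * π))) := by
    ext i j
    have hterm : ∀ k l : Fin m,
        (P i).coeff k * (∫ x : ℝ, x ^ ((k : ℕ) + (l : ℕ)) * Real.exp (-x ^ 2 / 2 + c * x)) *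
            (P j).coeff l
          = ∫ x : ℝ, ((P i).coeff k * x ^ (k : ℕ)) *
              (((P j).coeff l * x ^ (l : ℕ)) * Real.exp (-x ^ 2 / 2 + c * x)) := by
      intro k l
      rw [← MeasureTheory.integral_const_mul, ← MeasureTheory.integral_mul_const]
      congr 1; funext x; ring
    have hpt : ∀ x : ℝ,
        (∑ l : Fin m, ∑ k : Fin m, ((P i).coeff k * x ^ (k : ℕ)) *
            (((P j).coeff l * x ^ (l : ℕ)) * Real.exp (-x ^ 2 / 2 + c * x)))
          = (P i).eval x * (P j).eval x * Real.exp (-x ^ 2 / 2 + c * x) := by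
      intro x
      have hi : (P i).eval x = ∑ k : Fin m, (P i).coeff k * x ^ (k : ℕ) := by
        rw [eval_eq_sum_range' (lt_of_le_of_lt (le_of_eq (hPdeg i)) i.isLt),
          ← Fin.sum_univ_eq_sum_range]
      have hj : (P j).eval x = ∑ l : Fin m, (P j).coeff l * x ^ (l : ℕ) := by
        rw [eval_eq_sum_range' (lt_of_le_of_lt (le_of_eq (hPdeg j)) j.isLt),
          ← Fin.sum_univ_eq_sum_range]
      rw [hi, hj, Finset.sum_mul_sum]
      simp only [Finset.sum_mul]
      rw [Finset.sum_comm]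
      exact Finset.sum_congr rfl fun l _ => Finset.sum_congr rfl fun k _ => by ring
    have hentry : (L * Mmat * Lᵀ) i j
        = ∫ x : ℝ, (P i).eval x * (P j).eval x * Real.exp (-x ^ 2 / 2 + c * x) := by
      rw [Matrix.mul_apply]
      simp only [Matrix.mul_apply, Matrix.transpose_apply, hL, hMmat, Matrix.of_apply]
      calc (∑ l : Fin m, (∑ k : Fin m, (P i).coeff k *
              ∫ x : ℝ, x ^ ((k : ℕ) + (l : ℕ)) * Real.exp (-x ^ 2 / 2 + c * x)) * (P j).coeff l)
          = ∑ l : Fin m, ∑ k : Fin m, (P i).coeff k *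
              (∫ x : ℝ, x ^ ((k : ℕ) + (l : ℕ)) * Real.exp (-x ^ 2 / 2 + c * x)) *
              (P j).coeff l := by
            exact Finset.sum_congr rfl fun l _ => by rw [Finset.sum_mul]
        _ = ∑ l : Fin m, ∑ k : Fin m, ∫ x : ℝ, ((P i).coeff k * x ^ (k : ℕ)) *
              (((P j).coeff l * x ^ (l : ℕ)) * Real.exp (-x ^ 2 / 2 + c * x)) := by
            exact Finset.sum_congr rfl fun l _ => Finset.sum_congr rfl fun k _ => hterm k l
        _ = ∑ l : Fin m, ∫ x : ℝ, ∑ k : Fin m, ((P i).coeff k * x ^ (k : ℕ)) *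
              (((P j).coeff l * x ^ (l : ℕ)) * Real.exp (-x ^ 2 / 2 + c * x)) := by
            exact Finset.sum_congr rfl fun l _ =>
              (MeasureTheory.integral_finset_sum _ fun k _ =>
                integrable_mono_mono _ _ _ _ c).symm
        _ = ∫ x : ℝ, ∑ l : Fin m, ∑ k : Fin m, ((P i).coeff k * x ^ (k : ℕ)) *
              (((P j).coeff l * x ^ (l : ℕ)) * Real.exp (-x ^ 2 / 2 + c * x)) := by
            exact (MeasureTheory.integral_finset_sum _ fun l _ =>
              integrable_finset_sum _ fun k _ => integrable_mono_mono _ _ _ _ c).symm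
        _ = ∫ x : ℝ, (P i).eval x * (P j).eval x * Real.exp (-x ^ 2 / 2 + c * x) := by
            congr 1; funext x; exact hpt x
    rw [hentry, hP]
    rw [entry_integral c i j]
    rw [Matrix.diagonal_apply]
    by_cases h : i = j
    · subst h; rw [if_pos rfl, if_pos rfl]
    · rw [if_neg h, if_neg (fun hv => h (Fin.val_injective hv)), mul_zero]
  have hdet := congrArg Matrix.det hLML
  rw [Matrix.det_mul, Matrix.det_mul, Matrix.det_transpose, hdetL, one_mul, mul_one,
    Matrix.det_diagonal] at hdet
  exact hdet

end HankelGauss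


open HankelGauss in
/-- The `m×m` Hankel determinant of the moments `μ_n(c) = ∫_ℝ x^n e^{−x²/2+cx} dx` equals
`(2π)^{m/2} e^{mc²/2} ∏_{i=0}^{m−1} i!`. -/
theorem hankel_det_gaussian_moments (m : ℕ) (hm : 1 ≤ m) (c : ℝ) :
    Matrix.det (Matrix.of fun i j : Fin m =>
        ∫ x : ℝ, x ^ ((i : ℕ) + (j : ℕ)) * Real.exp (-x ^ 2 / 2 + c * x)) =
      (2 * Real.pi) ^ ((m : ℝ) / 2) * Real.exp ((m : ℝ) * c ^ 2 / 2) *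
        ∏ i ∈ Finset.range m, (i.factorial : ℝ) := by
  rw [HankelGauss.key_det m c, Finset.prod_mul_distrib, Finset.prod_mul_distrib]
  simp only [Finset.prod_const, Finset.card_univ, Fintype.card_fin]
  have h1 : Real.sqrt (2 * Real.pi) ^ m = (2 * Real.pi) ^ ((m : ℝ) / 2) := by
    rw [Real.sqrt_eq_rpow, ← Real.rpow_natCast ((2 * Real.pi) ^ ((1 : ℝ) / 2)) m,
      ← Real.rpow_mul (by positivity)]
    congr 1; ring
  have h2 : Real.exp (c ^ 2 / 2) ^ m = Real.exp ((m : ℝ) * c ^ 2 / 2) := by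
    rw [← Real.exp_nat_mul]; congr 1; ring
  rw [h1, h2, Fin.prod_univ_eq_prod_range (fun i => ((i.factorial : ℝ)))]
  ring
end
end
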